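/- arXiv:1705.09333 — 3 statements merged into one kernel-verified Lean document; each statement's English description precedes it below -/
import Mathlib

section
/- For all τ, z in the stated domain, the following identity holds: −y ∏_{n≥1} (1−q^n)² (1−ω²y⁻⁴q^{n−1}) (1−ωy⁴q^n) / [ (1−y⁻¹q^{n−1})(1−yq^n)(1−ω²y⁻¹q^{n−1})(1−ωyq^n) ] − y ∏_{n≥1} (1−q^n)² (1−ωy⁻⁴q^{n−1}) (1−ω²y⁴q^n) / [ (1−y⁻¹q^{n−1})(1−yq^n)(1−ωy⁻¹q^{n−1})(1−ω²yq^n) ] = −i ( η(3τ) / θ₁(3τ,3z) ) · [ θ₁(τ,4z+1/3) θ₁(τ,z−1/3) + θ₁(τ,4z−1/3) θ₁(τ,z+1/3) ]. (This is the identity establishing that the graded trace attached to the class 3A of the umbral group G⁽⁷⁾ equals the umbral meromorphic Jacobi form ψ⁽⁷⁾_{3A}.) -/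
open Complex

/-- Dedekind eta function via its infinite product:
    `η(τ) = e^{πiτ/12} ∏_{n≥1} (1 − e^{2πinτ})`. -/
noncomputable def Eta (τ : ℂ) : ℂ :=
  Complex.exp (Real.pi * Complex.I * τ / 12) *
    ∏' n : ℕ, (1 - Complex.exp (2 * Real.pi * Complex.I * ((n : ℂ) + 1) * τ))

/-- Jacobi theta function `θ₁` via its triple product expansion. -/
noncomputable def Theta1 (τ w : ℂ) : ℂ :=
  -Complex.I * Complex.exp (Real.pi * Complex.I * τ / 4) *
    Complex.exp (Real.pi * Complex.I * w) *
    ∏' n : ℕ,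
      ((1 - Complex.exp (-(2 * Real.pi * Complex.I * w)) *
            Complex.exp (2 * Real.pi * Complex.I * (n : ℂ) * τ)) *
       (1 - Complex.exp (2 * Real.pi * Complex.I * w) *
            Complex.exp (2 * Real.pi * Complex.I * ((n : ℂ) + 1) * τ)) *
       (1 - Complex.exp (2 * Real.pi * Complex.I * ((n : ℂ) + 1) * τ)))

/-- Jacobi theta function `θ₂` via its triple product expansion. -/
noncomputable def Theta2 (τ w : ℂ) : ℂ :=
  Complex.exp (Real.pi * Complex.I * τ / 4) *
    Complex.exp (Real.pi * Complex.I * w) *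
    ∏' n : ℕ,
      ((1 + Complex.exp (-(2 * Real.pi * Complex.I * w)) *
            Complex.exp (2 * Real.pi * Complex.I * (n : ℂ) * τ)) *
       (1 + Complex.exp (2 * Real.pi * Complex.I * w) *
            Complex.exp (2 * Real.pi * Complex.I * ((n : ℂ) + 1) * τ)) *
       (1 - Complex.exp (2 * Real.pi * Complex.I * ((n : ℂ) + 1) * τ)))

/-- A primitive cube root of unity, `ω = e^{2πi/3}`. -/
noncomputable def omega3 : ℂ := Complex.exp (2 * Real.pi * Complex.I / 3)

lemma my_ne_one {u : ℂ} (h : ‖u‖ < 1) : u ≠ 1 := by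
  intro h0; rw [h0] at h; simp at h

lemma my_one_sub_ne {u : ℂ} (h : ‖u‖ < 1) : (1 : ℂ) - u ≠ 0 := by
  intro h0
  have hu : u = 1 := by linear_combination -h0
  exact my_ne_one h hu

lemma my_summable_log {f : ℕ → ℂ} (hf : Summable f) :
    Summable (fun n => Complex.log (1 - f n)) := by
  have h0 : Filter.Tendsto (fun n => ‖f n‖) Filter.atTop (nhds 0) := by
    simpa using hf.tendsto_atTop_zero.norm
  apply Summable.of_norm_bounded_eventually_nat (g := fun n => (3/2) * ‖f n‖)
    (hf.norm.mul_left _)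
  filter_upwards [h0.eventually (eventually_le_nhds (by norm_num : (0:ℝ) < 1/2))] with n hn
  have h1 : (1 : ℂ) - f n = 1 + (-f n) := by ring
  rw [h1]
  simpa using Complex.norm_log_one_add_half_le_self (z := -f n) (by simpa using hn)

lemma my_multipliable_one_sub {f : ℕ → ℂ} (hf : Summable f) :
    Multipliable (fun n => 1 - f n) := by
  by_cases h : ∀ n, f n ≠ 1
  · exact Complex.multipliable_of_summable_log (my_summable_log hf)
  · push_neg at h
    obtain ⟨n₀, hn⟩ := h
    refine ⟨0, ?_⟩
    have hev : ∀ᶠ s : Finset ℕ in Filter.atTop, (0 : ℂ) = ∏ n ∈ s, (1 - f n) := by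
      filter_upwards [Filter.eventually_ge_atTop ({n₀} : Finset ℕ)] with s hs
      refine (Finset.prod_eq_zero (hs (Finset.mem_singleton_self n₀)) ?_).symm
      rw [hn]; ring
    exact Filter.Tendsto.congr' hev tendsto_const_nhds

lemma my_tprod_ne_zero {f : ℕ → ℂ} (hf : Summable f) (h : ∀ n, f n ≠ 1) :
    (∏' n, (1 - f n)) ≠ 0 := by
  have h2 : Complex.exp (∑' i, Complex.log (1 - f i)) = ∏' i, (1 - f i) :=
    Complex.cexp_tsum_eq_tprod (f := fun n => 1 - f n)
      (fun n => sub_ne_zero.mpr (Ne.symm (h n))) (my_summable_log hf)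
  rw [← h2]; exact Complex.exp_ne_zero _

lemma my_tprod_div {f g : ℕ → ℂ} (hf : Multipliable f) (hg : Multipliable g)
    (h0 : (∏' n, g n) ≠ 0) :
    (∏' n, f n / g n) = (∏' n, f n) / (∏' n, g n) := by
  have T : HasProd (fun n => f n / g n) ((∏' n, f n) / (∏' n, g n)) := by
    have := Filter.Tendsto.div hf.hasProd hg.hasProd h0
    simpa [HasProd, Finset.prod_div_distrib, Pi.div_def] using this
  exact T.tprod_eq

lemma my_sgeo {r : ℂ} (hr : ‖r‖ < 1) (c : ℂ) : Summable (fun n : ℕ => c * r ^ n) :=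
  (summable_geometric_of_norm_lt_one hr).mul_left c

lemma my_norm_lt {c r : ℂ} (hc : ‖c‖ < 1) (hr : ‖r‖ < 1) (k : ℕ) : ‖c * r ^ k‖ < 1 := by
  rw [norm_mul, norm_pow]
  calc ‖c‖ * ‖r‖ ^ k ≤ ‖c‖ * 1 :=
        mul_le_mul_of_nonneg_left (pow_le_one₀ (norm_nonneg r) hr.le) (norm_nonneg c)
    _ = ‖c‖ := mul_one _
    _ < 1 := hc

lemma my_om_cube : omega3 ^ 3 = 1 := by
  rw [omega3, ← Complex.exp_nat_mul,
    show ((3:ℕ):ℂ) * (2 * (Real.pi:ℂ) * I / 3) = 2 * (Real.pi:ℂ) * I by push_cast; ring]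
  exact Complex.exp_two_pi_mul_I

lemma my_om_ne_one : omega3 ≠ 1 := by
  intro h
  rw [omega3, Complex.exp_eq_one_iff] at h
  obtain ⟨n, hn⟩ := h
  have h2pi : (2 * (Real.pi:ℂ) * I) ≠ 0 := by
    simp [Real.pi_ne_zero, Complex.I_ne_zero]
  have hz : ((1 : ℂ) - 3 * (n:ℂ)) * (2 * (Real.pi:ℂ) * I) = 0 := by
    field_simp at hn
    linear_combination (2 * (Real.pi:ℂ) * I) * hn
  rcases mul_eq_zero.mp hz with h3 | h3
  · have h4 : ((3 * n : ℤ) : ℂ) = ((1 : ℤ) : ℂ) := by push_cast; linear_combination -h3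
    have : (3 * n : ℤ) = 1 := by exact_mod_cast h4
    omega
  · exact h2pi h3

lemma my_om_sum : omega3 ^ 2 + omega3 + 1 = 0 := by
  have h := my_om_cube
  have h2 : (omega3 - 1) * (omega3 ^ 2 + omega3 + 1) = 0 := by linear_combination h
  rcases mul_eq_zero.mp h2 with h3 | h3
  · exact absurd (by linear_combination h3) my_om_ne_one
  · exact h3

lemma my_om_sq : omega3 ^ 2 = Complex.exp (-(2 * (Real.pi:ℂ) * I / 3)) := by
  rw [omega3, ← Complex.exp_nat_mul,
    show ((2:ℕ):ℂ) * (2 * (Real.pi:ℂ) * I / 3)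
      = -(2 * (Real.pi:ℂ) * I / 3) + 2 * (Real.pi:ℂ) * I by push_cast; ring,
    Complex.exp_add, Complex.exp_two_pi_mul_I, mul_one]

lemma my_norm_omega : ‖omega3‖ = 1 := by
  rw [omega3, Complex.norm_exp]
  have h : (2 * (Real.pi:ℂ) * I / 3).re = 0 := by simp
  rw [h, Real.exp_zero]

lemma my_cube (u : ℂ) : (1 - u) * (1 - omega3 * u) * (1 - omega3 ^ 2 * u) = 1 - u ^ 3 := by
  linear_combination (-u + u^2) * my_om_sum + (u^2 - u^3) * my_om_cube

lemma my_final (y J pE pA pB pC pD pH e0 e34 e3z e14 e5 : ℂ)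
    (hJ : J ≠ 0) (hpH : pH ≠ 0) (h34 : e34 ≠ 0) (h3z : e3z ≠ 0)
    (hm : e0 * (e14 * e14) * e5 = y * (e34 * e3z)) :
    -y * (pE * pA * pB / pH) - y * (pE * pC * pD / pH)
      = -J * (e0 * pE / (-J * e34 * e3z * pH)) *
        (-(e14 * e14 * e5) * (pA * pB) + -(e14 * e14 * e5) * (pC * pD)) := by
  field_simp
  linear_combination (pE * (pA * pB + pC * pD)) * hm

set_option maxHeartbeats 4000000 in
/-- Umbral moonshine identity for the class 3A of G⁽⁷⁾: the graded trace equals ψ⁽⁷⁾_{3A}. -/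
theorem stmt_3 (τ z : ℂ) (h1 : 0 < -z.im) (h2 : -z.im < τ.im)
    (q y : ℂ)
    (hq : q = Complex.exp (2 * Real.pi * Complex.I * τ))
    (hy : y = Complex.exp (2 * Real.pi * Complex.I * z)) :
    -y * (∏' n : ℕ,
      ((1 - q ^ (n + 1)) ^ 2 * (1 - omega3 ^ 2 * y⁻¹ ^ 4 * q ^ n) *
          (1 - omega3 * y ^ 4 * q ^ (n + 1)) /
        ((1 - y⁻¹ * q ^ n) * (1 - y * q ^ (n + 1)) *
          (1 - omega3 ^ 2 * y⁻¹ * q ^ n) * (1 - omega3 * y * q ^ (n + 1)))))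
    - y * (∏' n : ℕ,
      ((1 - q ^ (n + 1)) ^ 2 * (1 - omega3 * y⁻¹ ^ 4 * q ^ n) *
          (1 - omega3 ^ 2 * y ^ 4 * q ^ (n + 1)) /
        ((1 - y⁻¹ * q ^ n) * (1 - y * q ^ (n + 1)) *
          (1 - omega3 * y⁻¹ * q ^ n) * (1 - omega3 ^ 2 * y * q ^ (n + 1)))))
    = -Complex.I * (Eta (3 * τ) / Theta1 (3 * τ) (3 * z)) *
        (Theta1 τ (4 * z + 1 / 3) * Theta1 τ (z - 1 / 3) +
          Theta1 τ (4 * z - 1 / 3) * Theta1 τ (z + 1 / 3)) := by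
  have pi_pos := Real.pi_pos
  have hre : ∀ w : ℂ, (2 * (Real.pi:ℂ) * I * w).re = -(2 * Real.pi * w.im) := by
    intro w
    simp [Complex.mul_re, Complex.mul_im]
  -- basic norm facts
  have hnq : ‖q‖ < 1 := by
    rw [hq, Complex.norm_exp, Real.exp_lt_one_iff, hre]
    nlinarith
  have hny : ‖y⁻¹‖ < 1 := by
    rw [hy, norm_inv, Complex.norm_exp, ← Real.exp_neg,
      Real.exp_lt_one_iff, hre]
    nlinarith
  have hnyq : ‖y * q‖ < 1 := by
    rw [hy, hq, norm_mul, Complex.norm_exp,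
      Complex.norm_exp, ← Real.exp_add, Real.exp_lt_one_iff, hre, hre]
    nlinarith
  have hnq3 : ‖q ^ 3‖ < 1 := by
    rw [norm_pow]; exact pow_lt_one₀ (norm_nonneg _) hnq (by norm_num)
  have hnyi3 : ‖y⁻¹ ^ 3‖ < 1 := by
    rw [norm_pow]; exact pow_lt_one₀ (norm_nonneg _) hny (by norm_num)
  have hnyi4 : ‖y⁻¹ ^ 4‖ < 1 := by
    rw [norm_pow]; exact pow_lt_one₀ (norm_nonneg _) hny (by norm_num)
  have hnyq3 : ‖(y * q) ^ 3‖ < 1 := by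
    rw [norm_pow]; exact pow_lt_one₀ (norm_nonneg _) hnyq (by norm_num)
  have hω1 : ∀ c : ℂ, ‖omega3 * c‖ = ‖c‖ := by
    intro c; rw [norm_mul, my_norm_omega, one_mul]
  have hω2 : ∀ c : ℂ, ‖omega3 ^ 2 * c‖ = ‖c‖ := by
    intro c; rw [norm_mul, norm_pow, my_norm_omega, one_pow, one_mul]
  -- summability
  have sE : Summable (fun n : ℕ => q ^ (3 * n + 3)) :=
    (my_sgeo hnq3 (q ^ 3)).congr (fun n => by ring)
  have sq1 : Summable (fun n : ℕ => q ^ (n + 1)) :=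
    (my_sgeo hnq q).congr (fun n => by ring)
  have sH1 : Summable (fun n : ℕ => y⁻¹ ^ 3 * q ^ (3 * n)) :=
    (my_sgeo hnq3 (y⁻¹ ^ 3)).congr (fun n => by ring)
  have sH2 : Summable (fun n : ℕ => y ^ 3 * q ^ (3 * n + 3)) :=
    (my_sgeo hnq3 (y ^ 3 * q ^ 3)).congr (fun n => by ring)
  have sA1 : Summable (fun n : ℕ => omega3 ^ 2 * y⁻¹ ^ 4 * q ^ n) := my_sgeo hnq _
  have sA2 : Summable (fun n : ℕ => omega3 * y ^ 4 * q ^ (n + 1)) :=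
    (my_sgeo hnq (omega3 * y ^ 4 * q)).congr (fun n => by ring)
  have sB1 : Summable (fun n : ℕ => omega3 * y⁻¹ * q ^ n) := my_sgeo hnq _
  have sB2 : Summable (fun n : ℕ => omega3 ^ 2 * y * q ^ (n + 1)) :=
    (my_sgeo hnq (omega3 ^ 2 * y * q)).congr (fun n => by ring)
  have sC1 : Summable (fun n : ℕ => omega3 * y⁻¹ ^ 4 * q ^ n) := my_sgeo hnq _
  have sC2 : Summable (fun n : ℕ => omega3 ^ 2 * y ^ 4 * q ^ (n + 1)) :=
    (my_sgeo hnq (omega3 ^ 2 * y ^ 4 * q)).congr (fun n => by ring)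
  have sD1 : Summable (fun n : ℕ => omega3 ^ 2 * y⁻¹ * q ^ n) := my_sgeo hnq _
  have sD2 : Summable (fun n : ℕ => omega3 * y * q ^ (n + 1)) :=
    (my_sgeo hnq (omega3 * y * q)).congr (fun n => by ring)
  -- multipliability
  have mE : Multipliable (fun n : ℕ => (1 - q ^ (3 * n + 3))) := my_multipliable_one_sub sE
  have mH1 : Multipliable (fun n : ℕ => (1 - y⁻¹ ^ 3 * q ^ (3 * n))) := my_multipliable_one_sub sH1
  have mH2 : Multipliable (fun n : ℕ => (1 - y ^ 3 * q ^ (3 * n + 3))) := my_multipliable_one_sub sH2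
  have mA : Multipliable (fun n : ℕ => ((1 - omega3 ^ 2 * y⁻¹ ^ 4 * q ^ n) * (1 - omega3 * y ^ 4 * q ^ (n + 1)) * (1 - q ^ (n + 1)))) :=
    ((my_multipliable_one_sub sA1).mul (my_multipliable_one_sub sA2)).mul
      (my_multipliable_one_sub sq1)
  have mB : Multipliable (fun n : ℕ => ((1 - omega3 * y⁻¹ * q ^ n) * (1 - omega3 ^ 2 * y * q ^ (n + 1)) * (1 - q ^ (n + 1)))) :=
    ((my_multipliable_one_sub sB1).mul (my_multipliable_one_sub sB2)).mul
      (my_multipliable_one_sub sq1)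
  have mC : Multipliable (fun n : ℕ => ((1 - omega3 * y⁻¹ ^ 4 * q ^ n) * (1 - omega3 ^ 2 * y ^ 4 * q ^ (n + 1)) * (1 - q ^ (n + 1)))) :=
    ((my_multipliable_one_sub sC1).mul (my_multipliable_one_sub sC2)).mul
      (my_multipliable_one_sub sq1)
  have mD : Multipliable (fun n : ℕ => ((1 - omega3 ^ 2 * y⁻¹ * q ^ n) * (1 - omega3 * y * q ^ (n + 1)) * (1 - q ^ (n + 1)))) :=
    ((my_multipliable_one_sub sD1).mul (my_multipliable_one_sub sD2)).mul
      (my_multipliable_one_sub sq1)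
  have mH12 : Multipliable (fun n : ℕ => (1 - y⁻¹ ^ 3 * q ^ (3 * n)) * (1 - y ^ 3 * q ^ (3 * n + 3))) := mH1.mul mH2
  have mH : Multipliable (fun n : ℕ => ((1 - y⁻¹ ^ 3 * q ^ (3 * n)) * (1 - y ^ 3 * q ^ (3 * n + 3)) * (1 - q ^ (3 * n + 3)))) := mH12.mul mE
  have mEA : Multipliable (fun n : ℕ => (1 - q ^ (3 * n + 3)) * ((1 - omega3 ^ 2 * y⁻¹ ^ 4 * q ^ n) * (1 - omega3 * y ^ 4 * q ^ (n + 1)) * (1 - q ^ (n + 1)))) := mE.mul mA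
  have mEC : Multipliable (fun n : ℕ => (1 - q ^ (3 * n + 3)) * ((1 - omega3 * y⁻¹ ^ 4 * q ^ n) * (1 - omega3 ^ 2 * y ^ 4 * q ^ (n + 1)) * (1 - q ^ (n + 1)))) := mE.mul mC
  have mEAB : Multipliable (fun n : ℕ => (1 - q ^ (3 * n + 3)) * ((1 - omega3 ^ 2 * y⁻¹ ^ 4 * q ^ n) * (1 - omega3 * y ^ 4 * q ^ (n + 1)) * (1 - q ^ (n + 1))) * ((1 - omega3 * y⁻¹ * q ^ n) * (1 - omega3 ^ 2 * y * q ^ (n + 1)) * (1 - q ^ (n + 1)))) := mEA.mul mB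
  have mECD : Multipliable (fun n : ℕ => (1 - q ^ (3 * n + 3)) * ((1 - omega3 * y⁻¹ ^ 4 * q ^ n) * (1 - omega3 ^ 2 * y ^ 4 * q ^ (n + 1)) * (1 - q ^ (n + 1))) * ((1 - omega3 ^ 2 * y⁻¹ * q ^ n) * (1 - omega3 * y * q ^ (n + 1)) * (1 - q ^ (n + 1)))) := mEC.mul mD
  -- nonvanishing of the theta denominator product
  have PHsplit : (∏' n : ℕ, ((1 - y⁻¹ ^ 3 * q ^ (3 * n)) * (1 - y ^ 3 * q ^ (3 * n + 3)) * (1 - q ^ (3 * n + 3)))) = (∏' n : ℕ, (1 - y⁻¹ ^ 3 * q ^ (3 * n))) * (∏' n : ℕ, (1 - y ^ 3 * q ^ (3 * n + 3))) * (∏' n : ℕ, (1 - q ^ (3 * n + 3))) := by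
    rw [Multipliable.tprod_mul mH12 mE, Multipliable.tprod_mul mH1 mH2]
  have PEne : (∏' n : ℕ, (1 - q ^ (3 * n + 3))) ≠ 0 :=
    my_tprod_ne_zero sE (fun n => my_ne_one (by
      rw [show q ^ (3 * n + 3) = q ^ 3 * q ^ (3 * n) by ring]
      exact my_norm_lt hnq3 hnq (3 * n)))
  have PHne : (∏' n : ℕ, ((1 - y⁻¹ ^ 3 * q ^ (3 * n)) * (1 - y ^ 3 * q ^ (3 * n + 3)) * (1 - q ^ (3 * n + 3)))) ≠ 0 := by
    rw [PHsplit]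
    refine mul_ne_zero (mul_ne_zero ?_ ?_) PEne
    · exact my_tprod_ne_zero sH1 (fun n => my_ne_one (my_norm_lt hnyi3 hnq (3 * n)))
    · exact my_tprod_ne_zero sH2 (fun n => my_ne_one (by
        rw [show y ^ 3 * q ^ (3 * n + 3) = (y * q) ^ 3 * q ^ (3 * n) by ring]
        exact my_norm_lt hnyq3 hnq (3 * n)))
  -- pointwise nonvanishing
  have fd1 : ∀ n : ℕ, (1 - y⁻¹ * q ^ n) ≠ 0 := fun n => my_one_sub_ne (my_norm_lt hny hnq n)
  have fd2 : ∀ n : ℕ, (1 - y * q ^ (n + 1)) ≠ 0 := fun n => my_one_sub_ne (by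
    rw [show y * q ^ (n + 1) = (y * q) * q ^ n by ring]
    exact my_norm_lt hnyq hnq n)
  have fd3 : ∀ n : ℕ, (1 - omega3 ^ 2 * y⁻¹ * q ^ n) ≠ 0 := fun n => my_one_sub_ne (by
    rw [show omega3 ^ 2 * y⁻¹ * q ^ n = (omega3 ^ 2 * y⁻¹) * q ^ n by ring]
    exact my_norm_lt (by rw [hω2]; exact hny) hnq n)
  have fd4 : ∀ n : ℕ, (1 - omega3 * y * q ^ (n + 1)) ≠ 0 := fun n => my_one_sub_ne (by
    rw [show omega3 * y * q ^ (n + 1) = (omega3 * (y * q)) * q ^ n by ring]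
    exact my_norm_lt (by rw [hω1]; exact hnyq) hnq n)
  have fd5 : ∀ n : ℕ, (1 - omega3 * y⁻¹ * q ^ n) ≠ 0 := fun n => my_one_sub_ne (by
    rw [show omega3 * y⁻¹ * q ^ n = (omega3 * y⁻¹) * q ^ n by ring]
    exact my_norm_lt (by rw [hω1]; exact hny) hnq n)
  have fd6 : ∀ n : ℕ, (1 - omega3 ^ 2 * y * q ^ (n + 1)) ≠ 0 := fun n => my_one_sub_ne (by
    rw [show omega3 ^ 2 * y * q ^ (n + 1) = (omega3 ^ 2 * (y * q)) * q ^ n by ring]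
    exact my_norm_lt (by rw [hω2]; exact hnyq) hnq n)
  have fh1 : ∀ n : ℕ, (1 - y⁻¹ ^ 3 * q ^ (3 * n)) ≠ 0 :=
    fun n => my_one_sub_ne (my_norm_lt hnyi3 hnq (3 * n))
  have fh2 : ∀ n : ℕ, (1 - y ^ 3 * q ^ (3 * n + 3)) ≠ 0 := fun n => my_one_sub_ne (by
    rw [show y ^ 3 * q ^ (3 * n + 3) = (y * q) ^ 3 * q ^ (3 * n) by ring]
    exact my_norm_lt hnyq3 hnq (3 * n))
  have fh3 : ∀ n : ℕ, (1 - q ^ (3 * n + 3)) ≠ 0 := fun n => my_one_sub_ne (by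
    rw [show q ^ (3 * n + 3) = q ^ 3 * q ^ (3 * n) by ring]
    exact my_norm_lt hnq3 hnq (3 * n))
  -- the cube identities
  have k1 : ∀ n : ℕ, (1 - y⁻¹ * q ^ n) * (1 - omega3 * y⁻¹ * q ^ n) *
      (1 - omega3 ^ 2 * y⁻¹ * q ^ n) = 1 - y⁻¹ ^ 3 * q ^ (3 * n) := by
    intro n
    linear_combination my_cube (y⁻¹ * q ^ n)
  have k2 : ∀ n : ℕ, (1 - y * q ^ (n + 1)) * (1 - omega3 * y * q ^ (n + 1)) *
      (1 - omega3 ^ 2 * y * q ^ (n + 1)) = 1 - y ^ 3 * q ^ (3 * n + 3) := by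
    intro n
    linear_combination my_cube (y * q ^ (n + 1))
  -- pointwise identification of the two graded-trace factors
  have hterm1 : ∀ n : ℕ,
      (1 - q ^ (n + 1)) ^ 2 * (1 - omega3 ^ 2 * y⁻¹ ^ 4 * q ^ n) *
          (1 - omega3 * y ^ 4 * q ^ (n + 1)) /
        ((1 - y⁻¹ * q ^ n) * (1 - y * q ^ (n + 1)) *
          (1 - omega3 ^ 2 * y⁻¹ * q ^ n) * (1 - omega3 * y * q ^ (n + 1)))
      = (1 - q ^ (3 * n + 3)) * ((1 - omega3 ^ 2 * y⁻¹ ^ 4 * q ^ n) * (1 - omega3 * y ^ 4 * q ^ (n + 1)) * (1 - q ^ (n + 1))) * ((1 - omega3 * y⁻¹ * q ^ n) * (1 - omega3 ^ 2 * y * q ^ (n + 1)) * (1 - q ^ (n + 1))) / ((1 - y⁻¹ ^ 3 * q ^ (3 * n)) * (1 - y ^ 3 * q ^ (3 * n + 3)) * (1 - q ^ (3 * n + 3))) := by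
    intro n
    rw [div_eq_div_iff
      (mul_ne_zero (mul_ne_zero (mul_ne_zero (fd1 n) (fd2 n)) (fd3 n)) (fd4 n))
      (mul_ne_zero (mul_ne_zero (fh1 n) (fh2 n)) (fh3 n)),
      ← k1 n, ← k2 n]
    ring
  have hterm2 : ∀ n : ℕ,
      (1 - q ^ (n + 1)) ^ 2 * (1 - omega3 * y⁻¹ ^ 4 * q ^ n) *
          (1 - omega3 ^ 2 * y ^ 4 * q ^ (n + 1)) /
        ((1 - y⁻¹ * q ^ n) * (1 - y * q ^ (n + 1)) *
          (1 - omega3 * y⁻¹ * q ^ n) * (1 - omega3 ^ 2 * y * q ^ (n + 1)))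
      = (1 - q ^ (3 * n + 3)) * ((1 - omega3 * y⁻¹ ^ 4 * q ^ n) * (1 - omega3 ^ 2 * y ^ 4 * q ^ (n + 1)) * (1 - q ^ (n + 1))) * ((1 - omega3 ^ 2 * y⁻¹ * q ^ n) * (1 - omega3 * y * q ^ (n + 1)) * (1 - q ^ (n + 1))) / ((1 - y⁻¹ ^ 3 * q ^ (3 * n)) * (1 - y ^ 3 * q ^ (3 * n + 3)) * (1 - q ^ (3 * n + 3))) := by
    intro n
    rw [div_eq_div_iff
      (mul_ne_zero (mul_ne_zero (mul_ne_zero (fd1 n) (fd2 n)) (fd5 n)) (fd6 n))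
      (mul_ne_zero (mul_ne_zero (fh1 n) (fh2 n)) (fh3 n)),
      ← k1 n, ← k2 n]
    ring
  -- evaluating the graded-trace infinite products
  have hL1 : (∏' n : ℕ,
      ((1 - q ^ (n + 1)) ^ 2 * (1 - omega3 ^ 2 * y⁻¹ ^ 4 * q ^ n) *
          (1 - omega3 * y ^ 4 * q ^ (n + 1)) /
        ((1 - y⁻¹ * q ^ n) * (1 - y * q ^ (n + 1)) *
          (1 - omega3 ^ 2 * y⁻¹ * q ^ n) * (1 - omega3 * y * q ^ (n + 1)))))
      = (∏' n : ℕ, (1 - q ^ (3 * n + 3))) * (∏' n : ℕ, ((1 - omega3 ^ 2 * y⁻¹ ^ 4 * q ^ n) * (1 - omega3 * y ^ 4 * q ^ (n + 1)) * (1 - q ^ (n + 1)))) * (∏' n : ℕ, ((1 - omega3 * y⁻¹ * q ^ n) * (1 - omega3 ^ 2 * y * q ^ (n + 1)) * (1 - q ^ (n + 1)))) / (∏' n : ℕ, ((1 - y⁻¹ ^ 3 * q ^ (3 * n)) * (1 - y ^ 3 * q ^ (3 * n + 3)) * (1 - q ^ (3 * n + 3)))) := by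
    rw [tprod_congr hterm1, my_tprod_div mEAB mH PHne, Multipliable.tprod_mul mEA mB, Multipliable.tprod_mul mE mA]
  have hL2 : (∏' n : ℕ,
      ((1 - q ^ (n + 1)) ^ 2 * (1 - omega3 * y⁻¹ ^ 4 * q ^ n) *
          (1 - omega3 ^ 2 * y ^ 4 * q ^ (n + 1)) /
        ((1 - y⁻¹ * q ^ n) * (1 - y * q ^ (n + 1)) *
          (1 - omega3 * y⁻¹ * q ^ n) * (1 - omega3 ^ 2 * y * q ^ (n + 1)))))
      = (∏' n : ℕ, (1 - q ^ (3 * n + 3))) * (∏' n : ℕ, ((1 - omega3 * y⁻¹ ^ 4 * q ^ n) * (1 - omega3 ^ 2 * y ^ 4 * q ^ (n + 1)) * (1 - q ^ (n + 1)))) * (∏' n : ℕ, ((1 - omega3 ^ 2 * y⁻¹ * q ^ n) * (1 - omega3 * y * q ^ (n + 1)) * (1 - q ^ (n + 1)))) / (∏' n : ℕ, ((1 - y⁻¹ ^ 3 * q ^ (3 * n)) * (1 - y ^ 3 * q ^ (3 * n + 3)) * (1 - q ^ (3 * n + 3)))) := by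
    rw [tprod_congr hterm2, my_tprod_div mECD mH PHne, Multipliable.tprod_mul mEC mD, Multipliable.tprod_mul mE mC]
  -- exponential computations
  have eq2 : ∀ n : ℕ, Complex.exp (2 * (Real.pi:ℂ) * I * ((n:ℂ) + 1) * τ) = q ^ (n + 1) := by
    intro n; rw [hq, ← Complex.exp_nat_mul]; congr 1; push_cast; ring
  have eq1 : ∀ n : ℕ, Complex.exp (2 * (Real.pi:ℂ) * I * (n:ℂ) * τ) = q ^ n := by
    intro n; rw [hq, ← Complex.exp_nat_mul]; congr 1; push_cast; ring
  have eq3 : ∀ n : ℕ, Complex.exp (2 * (Real.pi:ℂ) * I * (n:ℂ) * (3 * τ)) = q ^ (3 * n) := by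
    intro n; rw [hq, ← Complex.exp_nat_mul]; congr 1; push_cast; ring
  have eq4 : ∀ n : ℕ, Complex.exp (2 * (Real.pi:ℂ) * I * ((n:ℂ) + 1) * (3 * τ)) = q ^ (3 * n + 3) := by
    intro n; rw [hq, ← Complex.exp_nat_mul]; congr 1; push_cast; ring
  have eH1 : Complex.exp (-(2 * (Real.pi:ℂ) * I * (3 * z))) = y⁻¹ ^ 3 := by
    rw [hy, ← Complex.exp_neg, ← Complex.exp_nat_mul]; congr 1; push_cast; ring
  have eH2 : Complex.exp (2 * (Real.pi:ℂ) * I * (3 * z)) = y ^ 3 := by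
    rw [hy, ← Complex.exp_nat_mul]; congr 1; push_cast; ring
  have eA1 : Complex.exp (-(2 * (Real.pi:ℂ) * I * (4 * z + 1 / 3))) = omega3 ^ 2 * y⁻¹ ^ 4 := by
    rw [my_om_sq, hy, ← Complex.exp_neg, ← Complex.exp_nat_mul, ← Complex.exp_add]
    congr 1; push_cast; ring
  have eA2 : Complex.exp (2 * (Real.pi:ℂ) * I * (4 * z + 1 / 3)) = omega3 * y ^ 4 := by
    rw [omega3, hy, ← Complex.exp_nat_mul, ← Complex.exp_add]; congr 1; push_cast; ring
  have eB1 : Complex.exp (-(2 * (Real.pi:ℂ) * I * (z - 1 / 3))) = omega3 * y⁻¹ := by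
    rw [omega3, hy, ← Complex.exp_neg, ← Complex.exp_add]; congr 1; ring
  have eB2 : Complex.exp (2 * (Real.pi:ℂ) * I * (z - 1 / 3)) = omega3 ^ 2 * y := by
    rw [my_om_sq, hy, ← Complex.exp_add]; congr 1; ring
  have eC1 : Complex.exp (-(2 * (Real.pi:ℂ) * I * (4 * z - 1 / 3))) = omega3 * y⁻¹ ^ 4 := by
    rw [omega3, hy, ← Complex.exp_neg, ← Complex.exp_nat_mul, ← Complex.exp_add]
    congr 1; push_cast; ring
  have eC2 : Complex.exp (2 * (Real.pi:ℂ) * I * (4 * z - 1 / 3)) = omega3 ^ 2 * y ^ 4 := by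
    rw [my_om_sq, hy, ← Complex.exp_nat_mul, ← Complex.exp_add]; congr 1; push_cast; ring
  have eD1 : Complex.exp (-(2 * (Real.pi:ℂ) * I * (z + 1 / 3))) = omega3 ^ 2 * y⁻¹ := by
    rw [my_om_sq, hy, ← Complex.exp_neg, ← Complex.exp_add]; congr 1; ring
  have eD2 : Complex.exp (2 * (Real.pi:ℂ) * I * (z + 1 / 3)) = omega3 * y := by
    rw [omega3, hy, ← Complex.exp_add]; congr 1; ring
  -- rewriting the eta and theta functions
  have hη : Eta (3 * τ) = Complex.exp ((Real.pi:ℂ) * I * (3 * τ) / 12) * (∏' n : ℕ, (1 - q ^ (3 * n + 3))) := by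
    rw [Eta]
    congr 1
    exact tprod_congr fun n => by rw [eq4 n]
  have hθ3 : Theta1 (3 * τ) (3 * z) = -I * Complex.exp ((Real.pi:ℂ) * I * (3 * τ) / 4) * Complex.exp ((Real.pi:ℂ) * I * (3 * z)) * (∏' n : ℕ, ((1 - y⁻¹ ^ 3 * q ^ (3 * n)) * (1 - y ^ 3 * q ^ (3 * n + 3)) * (1 - q ^ (3 * n + 3)))) := by
    rw [Theta1]
    congr 1
    exact tprod_congr fun n => by rw [eH1, eH2, eq3 n, eq4 n]
  have hθA : Theta1 τ (4 * z + 1 / 3) = -I * Complex.exp ((Real.pi:ℂ) * I * τ / 4) * Complex.exp ((Real.pi:ℂ) * I * (4 * z + 1 / 3)) * (∏' n : ℕ, ((1 - omega3 ^ 2 * y⁻¹ ^ 4 * q ^ n) * (1 - omega3 * y ^ 4 * q ^ (n + 1)) * (1 - q ^ (n + 1)))) := by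
    rw [Theta1]
    congr 1
    exact tprod_congr fun n => by rw [eA1, eA2, eq1 n, eq2 n]
  have hθB : Theta1 τ (z - 1 / 3) = -I * Complex.exp ((Real.pi:ℂ) * I * τ / 4) * Complex.exp ((Real.pi:ℂ) * I * (z - 1 / 3)) * (∏' n : ℕ, ((1 - omega3 * y⁻¹ * q ^ n) * (1 - omega3 ^ 2 * y * q ^ (n + 1)) * (1 - q ^ (n + 1)))) := by
    rw [Theta1]
    congr 1
    exact tprod_congr fun n => by rw [eB1, eB2, eq1 n, eq2 n]
  have hθC : Theta1 τ (4 * z - 1 / 3) = -I * Complex.exp ((Real.pi:ℂ) * I * τ / 4) * Complex.exp ((Real.pi:ℂ) * I * (4 * z - 1 / 3)) * (∏' n : ℕ, ((1 - omega3 * y⁻¹ ^ 4 * q ^ n) * (1 - omega3 ^ 2 * y ^ 4 * q ^ (n + 1)) * (1 - q ^ (n + 1)))) := by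
    rw [Theta1]
    congr 1
    exact tprod_congr fun n => by rw [eC1, eC2, eq1 n, eq2 n]
  have hθD : Theta1 τ (z + 1 / 3) = -I * Complex.exp ((Real.pi:ℂ) * I * τ / 4) * Complex.exp ((Real.pi:ℂ) * I * (z + 1 / 3)) * (∏' n : ℕ, ((1 - omega3 ^ 2 * y⁻¹ * q ^ n) * (1 - omega3 * y * q ^ (n + 1)) * (1 - q ^ (n + 1)))) := by
    rw [Theta1]
    congr 1
    exact tprod_congr fun n => by rw [eD1, eD2, eq1 n, eq2 n]
  -- scalar prefactor identities
  have sAB : Complex.exp ((Real.pi:ℂ) * I * (4 * z + 1 / 3)) * Complex.exp ((Real.pi:ℂ) * I * (z - 1 / 3)) = Complex.exp ((Real.pi:ℂ) * I * (5 * z)) := by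
    rw [← Complex.exp_add]; congr 1; ring
  have sCD : Complex.exp ((Real.pi:ℂ) * I * (4 * z - 1 / 3)) * Complex.exp ((Real.pi:ℂ) * I * (z + 1 / 3)) = Complex.exp ((Real.pi:ℂ) * I * (5 * z)) := by
    rw [← Complex.exp_add]; congr 1; ring
  have sMain : Complex.exp ((Real.pi:ℂ) * I * (3 * τ) / 12) * (Complex.exp ((Real.pi:ℂ) * I * τ / 4) * Complex.exp ((Real.pi:ℂ) * I * τ / 4)) * Complex.exp ((Real.pi:ℂ) * I * (5 * z)) = y * (Complex.exp ((Real.pi:ℂ) * I * (3 * τ) / 4) * Complex.exp ((Real.pi:ℂ) * I * (3 * z))) := by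
    rw [hy]
    simp only [← Complex.exp_add]
    congr 1; ring
  have hAB : Theta1 τ (4 * z + 1 / 3) * Theta1 τ (z - 1 / 3)
      = -(Complex.exp ((Real.pi:ℂ) * I * τ / 4) * Complex.exp ((Real.pi:ℂ) * I * τ / 4) * Complex.exp ((Real.pi:ℂ) * I * (5 * z))) * ((∏' n : ℕ, ((1 - omega3 ^ 2 * y⁻¹ ^ 4 * q ^ n) * (1 - omega3 * y ^ 4 * q ^ (n + 1)) * (1 - q ^ (n + 1)))) * (∏' n : ℕ, ((1 - omega3 * y⁻¹ * q ^ n) * (1 - omega3 ^ 2 * y * q ^ (n + 1)) * (1 - q ^ (n + 1))))) := by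
    rw [hθA, hθB, ← sAB]
    linear_combination (Complex.exp ((Real.pi:ℂ) * I * τ / 4) * Complex.exp ((Real.pi:ℂ) * I * τ / 4) * Complex.exp ((Real.pi:ℂ) * I * (4 * z + 1 / 3)) * Complex.exp ((Real.pi:ℂ) * I * (z - 1 / 3)) * (∏' n : ℕ, ((1 - omega3 ^ 2 * y⁻¹ ^ 4 * q ^ n) * (1 - omega3 * y ^ 4 * q ^ (n + 1)) * (1 - q ^ (n + 1)))) * (∏' n : ℕ, ((1 - omega3 * y⁻¹ * q ^ n) * (1 - omega3 ^ 2 * y * q ^ (n + 1)) * (1 - q ^ (n + 1))))) * Complex.I_mul_I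
  have hCD : Theta1 τ (4 * z - 1 / 3) * Theta1 τ (z + 1 / 3)
      = -(Complex.exp ((Real.pi:ℂ) * I * τ / 4) * Complex.exp ((Real.pi:ℂ) * I * τ / 4) * Complex.exp ((Real.pi:ℂ) * I * (5 * z))) * ((∏' n : ℕ, ((1 - omega3 * y⁻¹ ^ 4 * q ^ n) * (1 - omega3 ^ 2 * y ^ 4 * q ^ (n + 1)) * (1 - q ^ (n + 1)))) * (∏' n : ℕ, ((1 - omega3 ^ 2 * y⁻¹ * q ^ n) * (1 - omega3 * y * q ^ (n + 1)) * (1 - q ^ (n + 1))))) := by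
    rw [hθC, hθD, ← sCD]
    linear_combination (Complex.exp ((Real.pi:ℂ) * I * τ / 4) * Complex.exp ((Real.pi:ℂ) * I * τ / 4) * Complex.exp ((Real.pi:ℂ) * I * (4 * z - 1 / 3)) * Complex.exp ((Real.pi:ℂ) * I * (z + 1 / 3)) * (∏' n : ℕ, ((1 - omega3 * y⁻¹ ^ 4 * q ^ n) * (1 - omega3 ^ 2 * y ^ 4 * q ^ (n + 1)) * (1 - q ^ (n + 1)))) * (∏' n : ℕ, ((1 - omega3 ^ 2 * y⁻¹ * q ^ n) * (1 - omega3 * y * q ^ (n + 1)) * (1 - q ^ (n + 1))))) * Complex.I_mul_I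
  -- final assembly
  rw [hL1, hL2, hη, hθ3, hAB, hCD]
  have hE34 : Complex.exp ((Real.pi:ℂ) * I * (3 * τ) / 4) ≠ 0 := Complex.exp_ne_zero _
  have hE3Z : Complex.exp ((Real.pi:ℂ) * I * (3 * z)) ≠ 0 := Complex.exp_ne_zero _
  exact my_final y I _ _ _ _ _ _ _ _ _ _ _ Complex.I_ne_zero PHne
    (Complex.exp_ne_zero _) (Complex.exp_ne_zero _) sMain
end

section
/- For all τ, z in the stated domain, the following infinite product identity holds: −2y ∏_{n≥1} (1−q^n)² (1−y⁻²q^{n−1}) (1−iy⁻²q^{n−1}) (1+iy⁻²q^{n−1}) (1−y²q^n) (1−iy²q^n) (1+iy²q^n) / [ ∏_{k∈{1,3,5,7}} (1−ζ₈^k y⁻¹q^{n−1}) (1−ζ₈^k yq^n) ] = −2i · η(τ) η(4τ) θ₁(τ,2z) θ₂(2τ,4z) / ( η(2τ) θ₂(4τ,4z) ). (This is the identity establishing that the graded trace attached to the class 8A of the umbral group G⁽⁴⁾ equals the umbral meromorphic Jacobi form ψ⁽⁴⁾_{8A}.) -/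
open Complex Filter

noncomputable def Gfam (c r : ℂ) (n : ℕ) : ℂ := 1 + c * r ^ n

lemma summable_log_Gfam {c r : ℂ} (hr : ‖r‖ < 1) :
    Summable fun n : ℕ => Complex.log (Gfam c r n) := by
  have hg : Summable fun n : ℕ => (3/2 : ℝ) * (‖c‖ * ‖r‖ ^ n) :=
    ((summable_geometric_of_lt_one (norm_nonneg r) hr).mul_left ‖c‖).mul_left _
  apply Summable.of_norm_bounded_eventually hg
  rw [Nat.cofinite_eq_atTop]
  have h0 : Tendsto (fun n : ℕ => c * r ^ n) atTop (nhds 0) := by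
    simpa using (tendsto_pow_atTop_nhds_zero_of_norm_lt_one hr).const_mul c
  have h12 : ∀ᶠ n : ℕ in atTop, ‖c * r ^ n‖ ≤ 1/2 := by
    have hn0 : Tendsto (fun n : ℕ => ‖c * r ^ n‖) atTop (nhds 0) := by simpa using h0.norm
    have := hn0.eventually_le_const (by norm_num : (0:ℝ) < 1/2)
    simpa using this
  filter_upwards [h12] with n hn
  have := Complex.norm_log_one_add_half_le_self (z := c * r ^ n) hn
  calc ‖Complex.log (Gfam c r n)‖ = ‖Complex.log (1 + c * r ^ n)‖ := rfl
    _ ≤ 3/2 * ‖c * r ^ n‖ := this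
    _ ≤ 3/2 * (‖c‖ * ‖r‖ ^ n) := by
        rw [norm_mul, norm_pow]

lemma Gfam_ne_zero {c r : ℂ} (hc : ‖c‖ < 1) (hr : ‖r‖ ≤ 1) (n : ℕ) : Gfam c r n ≠ 0 := by
  have h : ‖c * r ^ n‖ < 1 := by
    calc ‖c * r ^ n‖ = ‖c‖ * ‖r‖ ^ n := by rw [norm_mul, norm_pow]
      _ ≤ ‖c‖ * 1 := by
          refine mul_le_mul_of_nonneg_left ?_ (norm_nonneg c)
          exact pow_le_one₀ (norm_nonneg r) hr
      _ < 1 := by simpa using hc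
  intro h0
  rw [Gfam, add_eq_zero_iff_eq_neg] at h0
  have h1 : ‖(1:ℂ)‖ = ‖-(c * r ^ n)‖ := by rw [h0]
  simp only [norm_one, norm_neg] at h1
  linarith

lemma multipliable_Gfam {c r : ℂ} (hr : ‖r‖ < 1) : Multipliable (Gfam c r) := by
  by_cases hne : ∀ n, Gfam c r n ≠ 0
  · exact Complex.multipliable_of_summable_log (summable_log_Gfam hr)
  · push_neg at hne
    obtain ⟨n₀, hn₀⟩ := hne
    refine ⟨0, ?_⟩
    rw [HasProd]
    have hev : ∀ᶠ s : Finset ℕ in atTop, ∏ i ∈ s, Gfam c r i = 0 := by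
      filter_upwards [eventually_ge_atTop {n₀}] with s hs
      exact Finset.prod_eq_zero (hs (Finset.mem_singleton_self n₀)) hn₀
    exact Tendsto.congr' (by filter_upwards [hev] with s hs; exact hs.symm) tendsto_const_nhds

lemma summable_log_inv_Gfam {c r : ℂ} (hc : ‖c‖ < 1) (hr : ‖r‖ < 1) :
    Summable fun n : ℕ => Complex.log ((Gfam c r n)⁻¹) := by
  have hg : Summable fun n : ℕ => (2 : ℝ) * (‖c‖ * ‖r‖ ^ n) :=
    ((summable_geometric_of_lt_one (norm_nonneg r) hr).mul_left ‖c‖).mul_left _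
  apply Summable.of_norm_bounded_eventually hg
  rw [Nat.cofinite_eq_atTop]
  have h0 : Tendsto (fun n : ℕ => c * r ^ n) atTop (nhds 0) := by
    simpa using (tendsto_pow_atTop_nhds_zero_of_norm_lt_one hr).const_mul c
  have hn0 : Tendsto (fun n : ℕ => ‖c * r ^ n‖) atTop (nhds 0) := by simpa using h0.norm
  have h14 : ∀ᶠ n : ℕ in atTop, ‖c * r ^ n‖ ≤ 1/4 := by
    have := hn0.eventually_le_const (by norm_num : (0:ℝ) < 1/4)
    simpa using this
  filter_upwards [h14] with n hn
  set w := c * r ^ n with hw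
  have hne : (1 : ℂ) + w ≠ 0 := Gfam_ne_zero hc hr.le n
  have h1w : (3/4 : ℝ) ≤ ‖(1 : ℂ) + w‖ := by
    have h5 : ‖(1 + w : ℂ) - w‖ ≤ ‖(1+w : ℂ)‖ + ‖w‖ := norm_sub_le _ _
    simp only [add_sub_cancel_right, norm_one] at h5
    linarith
  have hinv : (Gfam c r n)⁻¹ = 1 + (-(w / (1 + w))) := by
    rw [Gfam, ← hw]
    field_simp
    ring
  have hwn : ‖-(w / (1 + w))‖ ≤ 1/2 := by
    rw [norm_neg, norm_div]
    rw [div_le_iff₀ (by linarith : (0:ℝ) < ‖(1:ℂ)+w‖)]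
    nlinarith [norm_nonneg ((1:ℂ)+w)]
  have hb := Complex.norm_log_one_add_half_le_self hwn
  rw [hinv]
  calc ‖Complex.log (1 + -(w / (1 + w)))‖ ≤ 3/2 * ‖-(w / (1 + w))‖ := hb
    _ ≤ 2 * ‖w‖ := by
        rw [norm_neg, norm_div]
        have hpos : (0:ℝ) < ‖(1:ℂ)+w‖ := by linarith
        have h6 : ‖w‖ / ‖(1:ℂ)+w‖ ≤ 4/3 * ‖w‖ := by
          rw [div_le_iff₀ hpos]; nlinarith [norm_nonneg w]
        linarith
    _ = 2 * (‖c‖ * ‖r‖ ^ n) := by rw [hw, norm_mul, norm_pow]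

lemma multipliable_inv_Gfam {c r : ℂ} (hc : ‖c‖ < 1) (hr : ‖r‖ < 1) :
    Multipliable (fun n : ℕ => (Gfam c r n)⁻¹) :=
  Complex.multipliable_of_summable_log (summable_log_inv_Gfam hc hr)

lemma tprod_Gfam_mul_inv {c r : ℂ} (hc : ‖c‖ < 1) (hr : ‖r‖ < 1) :
    (∏' n : ℕ, Gfam c r n) * (∏' n : ℕ, (Gfam c r n)⁻¹) = 1 := by
  rw [← Multipliable.tprod_mul (multipliable_Gfam hr) (multipliable_inv_Gfam hc hr)]
  have : ∀ n : ℕ, Gfam c r n * (Gfam c r n)⁻¹ = 1 := fun n =>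
    mul_inv_cancel₀ (Gfam_ne_zero hc hr.le n)
  rw [tprod_congr this, tprod_one]

lemma tprod_Gfam_ne_zero {c r : ℂ} (hc : ‖c‖ < 1) (hr : ‖r‖ < 1) :
    (∏' n : ℕ, Gfam c r n) ≠ 0 :=
  left_ne_zero_of_mul_eq_one (tprod_Gfam_mul_inv hc hr)

lemma tprod_inv_Gfam {c r : ℂ} (hc : ‖c‖ < 1) (hr : ‖r‖ < 1) :
    (∏' n : ℕ, (Gfam c r n)⁻¹) = (∏' n : ℕ, Gfam c r n)⁻¹ :=
  eq_inv_of_mul_eq_one_left (by rw [mul_comm]; exact tprod_Gfam_mul_inv hc hr)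

lemma zeta8_aux_pow_four : Complex.exp (Real.pi * Complex.I / 4) ^ 4 = -1 := by
  rw [← Complex.exp_nat_mul]
  rw [show ((4:ℕ):ℂ) * ((Real.pi:ℂ) * Complex.I / 4) = (Real.pi:ℂ) * Complex.I by
    push_cast; ring]
  exact Complex.exp_pi_mul_I

/-- A primitive eighth root of unity, `ζ₈ = e^{πi/4}`. -/
noncomputable def zeta8 : ℂ := Complex.exp (Real.pi * Complex.I / 4)


lemma zeta8_pow_four : zeta8 ^ 4 = -1 := by
  rw [zeta8]; exact zeta8_aux_pow_four

lemma zid (x : ℂ) :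
    (1 - zeta8 * x) * (1 - zeta8 ^ 3 * x) * (1 - zeta8 ^ 5 * x) * (1 - zeta8 ^ 7 * x)
      = 1 + x ^ 4 := by
  linear_combination (-(zeta8 + zeta8 ^ 3) * x + zeta8 ^ 4 * (1 + zeta8 ^ 2 + zeta8 ^ 4) * x ^ 2
    - (zeta8 ^ 9 + zeta8 ^ 11) * x ^ 3 + (zeta8 ^ 12 - zeta8 ^ 8 + zeta8 ^ 4 - 1) * x ^ 4)
    * zeta8_pow_four

/-- Umbral moonshine product identity for the class 8A of G⁽⁴⁾: the graded trace equals ψ⁽⁴⁾_{8A}. -/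
theorem stmt_13 (τ z : ℂ) (h1 : 0 < -z.im) (h2 : -z.im < τ.im)
    (q y : ℂ)
    (hq : q = Complex.exp (2 * Real.pi * Complex.I * τ))
    (hy : y = Complex.exp (2 * Real.pi * Complex.I * z)) :
    -2 * y * (∏' n : ℕ,
      ((1 - q ^ (n + 1)) ^ 2 * (1 - y⁻¹ ^ 2 * q ^ n) * (1 - Complex.I * y⁻¹ ^ 2 * q ^ n) *
          (1 + Complex.I * y⁻¹ ^ 2 * q ^ n) * (1 - y ^ 2 * q ^ (n + 1)) *
          (1 - Complex.I * y ^ 2 * q ^ (n + 1)) * (1 + Complex.I * y ^ 2 * q ^ (n + 1)) /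
        ((1 - zeta8 * y⁻¹ * q ^ n) * (1 - zeta8 * y * q ^ (n + 1)) *
          (1 - zeta8 ^ 3 * y⁻¹ * q ^ n) * (1 - zeta8 ^ 3 * y * q ^ (n + 1)) *
          (1 - zeta8 ^ 5 * y⁻¹ * q ^ n) * (1 - zeta8 ^ 5 * y * q ^ (n + 1)) *
          (1 - zeta8 ^ 7 * y⁻¹ * q ^ n) * (1 - zeta8 ^ 7 * y * q ^ (n + 1)))))
    = -2 * Complex.I * Eta τ * Eta (4 * τ) * Theta1 τ (2 * z) * Theta2 (2 * τ) (4 * z) /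
        (Eta (2 * τ) * Theta2 (4 * τ) (4 * z)) := by
  have hπ := Real.pi_pos
  -- norm of exp(2πiw)
  have hre : ∀ w : ℂ, ‖Complex.exp (2 * (Real.pi:ℂ) * Complex.I * w)‖
      = Real.exp (-(2 * Real.pi * w.im)) := by
    intro w
    rw [Complex.norm_exp]
    congr 1
    simp [Complex.mul_re, Complex.mul_im]
  have hq1 : ‖q‖ < 1 := by
    rw [hq, hre]
    rw [Real.exp_lt_one_iff]
    nlinarith
  have hyi1 : ‖y⁻¹‖ < 1 := by
    rw [hy, ← Complex.exp_neg,
      show -(2 * (Real.pi:ℂ) * Complex.I * z) = 2 * (Real.pi:ℂ) * Complex.I * (-z) by ring,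
      hre]
    rw [Real.exp_lt_one_iff]
    simp only [Complex.neg_im]
    nlinarith
  have hyq1 : ‖y * q‖ < 1 := by
    rw [hy, hq, ← Complex.exp_add,
      show 2 * (Real.pi:ℂ) * Complex.I * z + 2 * (Real.pi:ℂ) * Complex.I * τ
        = 2 * (Real.pi:ℂ) * Complex.I * (z + τ) by ring, hre]
    rw [Real.exp_lt_one_iff]
    simp only [Complex.add_im]
    nlinarith
  have hq2 : ‖q ^ 2‖ < 1 := by
    rw [norm_pow]; exact pow_lt_one₀ (norm_nonneg q) hq1 (by norm_num)
  have hq4 : ‖q ^ 4‖ < 1 := by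
    rw [norm_pow]; exact pow_lt_one₀ (norm_nonneg q) hq1 (by norm_num)
  have hcA1 : ‖-q‖ < 1 := by rwa [norm_neg]
  have hcA2 : ‖-(q ^ 2)‖ < 1 := by rwa [norm_neg]
  have hcA4 : ‖-(q ^ 4)‖ < 1 := by rwa [norm_neg]
  have hcB1 : ‖-(y⁻¹ ^ 2)‖ < 1 := by
    rw [norm_neg, norm_pow]; exact pow_lt_one₀ (norm_nonneg _) hyi1 (by norm_num)
  have hcC1 : ‖y⁻¹ ^ 4‖ < 1 := by
    rw [norm_pow]; exact pow_lt_one₀ (norm_nonneg _) hyi1 (by norm_num)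
  have hcD2 : ‖y ^ 4 * q ^ 4‖ < 1 := by
    rw [show y ^ 4 * q ^ 4 = (y * q) ^ 4 by ring, norm_pow]
    exact pow_lt_one₀ (norm_nonneg _) hyq1 (by norm_num)
  -- multipliable families
  have mA1 : Multipliable (Gfam (-q) q) := multipliable_Gfam hq1
  have mA2 : Multipliable (Gfam (-(q ^ 2)) (q ^ 2)) := multipliable_Gfam hq2
  have mA4 : Multipliable (Gfam (-(q ^ 4)) (q ^ 4)) := multipliable_Gfam hq4
  have mB1 : Multipliable (Gfam (-(y⁻¹ ^ 2)) q) := multipliable_Gfam hq1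
  have mB2 : Multipliable (Gfam (-(y ^ 2 * q)) q) := multipliable_Gfam hq1
  have mC1 : Multipliable (Gfam (y⁻¹ ^ 4) (q ^ 2)) := multipliable_Gfam hq2
  have mC2 : Multipliable (Gfam (y ^ 4 * q ^ 2) (q ^ 2)) := multipliable_Gfam hq2
  have mD1 : Multipliable (Gfam (y⁻¹ ^ 4) (q ^ 4)) := multipliable_Gfam hq4
  have mD2 : Multipliable (Gfam (y ^ 4 * q ^ 4) (q ^ 4)) := multipliable_Gfam hq4
  have mD1i : Multipliable (fun n : ℕ => (Gfam (y⁻¹ ^ 4) (q ^ 4) n)⁻¹) :=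
    multipliable_inv_Gfam hcC1 hq4
  have mD2i : Multipliable (fun n : ℕ => (Gfam (y ^ 4 * q ^ 4) (q ^ 4) n)⁻¹) :=
    multipliable_inv_Gfam hcD2 hq4
  -- exponential rewrites
  have hqn : ∀ n : ℕ, Complex.exp (2 * (Real.pi:ℂ) * Complex.I * (n : ℂ) * τ) = q ^ n := by
    intro n
    rw [show 2 * (Real.pi:ℂ) * Complex.I * (n : ℂ) * τ
        = ((n : ℕ) : ℂ) * (2 * (Real.pi:ℂ) * Complex.I * τ) by ring,
      Complex.exp_nat_mul, ← hq]
  have hqn1 : ∀ n : ℕ, Complex.exp (2 * (Real.pi:ℂ) * Complex.I * ((n : ℂ) + 1) * τ)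
      = q ^ (n + 1) := by
    intro n
    rw [show 2 * (Real.pi:ℂ) * Complex.I * ((n : ℂ) + 1) * τ
        = (((n + 1 : ℕ)) : ℂ) * (2 * (Real.pi:ℂ) * Complex.I * τ) by push_cast; ring,
      Complex.exp_nat_mul, ← hq]
  have hq2n : ∀ n : ℕ, Complex.exp (2 * (Real.pi:ℂ) * Complex.I * (n : ℂ) * (2 * τ))
      = (q ^ 2) ^ n := by
    intro n
    rw [show 2 * (Real.pi:ℂ) * Complex.I * (n : ℂ) * (2 * τ)
        = ((2 * n : ℕ) : ℂ) * (2 * (Real.pi:ℂ) * Complex.I * τ) by push_cast; ring,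
      Complex.exp_nat_mul, ← hq, pow_mul]
  have hq2n1 : ∀ n : ℕ, Complex.exp (2 * (Real.pi:ℂ) * Complex.I * ((n : ℂ) + 1) * (2 * τ))
      = (q ^ 2) ^ (n + 1) := by
    intro n
    rw [show 2 * (Real.pi:ℂ) * Complex.I * ((n : ℂ) + 1) * (2 * τ)
        = ((2 * (n + 1) : ℕ) : ℂ) * (2 * (Real.pi:ℂ) * Complex.I * τ) by push_cast; ring,
      Complex.exp_nat_mul, ← hq, pow_mul]
  have hq4n : ∀ n : ℕ, Complex.exp (2 * (Real.pi:ℂ) * Complex.I * (n : ℂ) * (4 * τ))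
      = (q ^ 4) ^ n := by
    intro n
    rw [show 2 * (Real.pi:ℂ) * Complex.I * (n : ℂ) * (4 * τ)
        = ((4 * n : ℕ) : ℂ) * (2 * (Real.pi:ℂ) * Complex.I * τ) by push_cast; ring,
      Complex.exp_nat_mul, ← hq, pow_mul]
  have hq4n1 : ∀ n : ℕ, Complex.exp (2 * (Real.pi:ℂ) * Complex.I * ((n : ℂ) + 1) * (4 * τ))
      = (q ^ 4) ^ (n + 1) := by
    intro n
    rw [show 2 * (Real.pi:ℂ) * Complex.I * ((n : ℂ) + 1) * (4 * τ)
        = ((4 * (n + 1) : ℕ) : ℂ) * (2 * (Real.pi:ℂ) * Complex.I * τ) by push_cast; ring,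
      Complex.exp_nat_mul, ← hq, pow_mul]
  have hy2 : Complex.exp (2 * (Real.pi:ℂ) * Complex.I * (2 * z)) = y ^ 2 := by
    rw [show 2 * (Real.pi:ℂ) * Complex.I * (2 * z)
        = ((2 : ℕ) : ℂ) * (2 * (Real.pi:ℂ) * Complex.I * z) by push_cast; ring,
      Complex.exp_nat_mul, ← hy]
  have hy2i : Complex.exp (-(2 * (Real.pi:ℂ) * Complex.I * (2 * z))) = y⁻¹ ^ 2 := by
    rw [show -(2 * (Real.pi:ℂ) * Complex.I * (2 * z))
        = ((2 : ℕ) : ℂ) * (-(2 * (Real.pi:ℂ) * Complex.I * z)) by push_cast; ring,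
      Complex.exp_nat_mul, Complex.exp_neg, ← hy]
  have hy4 : Complex.exp (2 * (Real.pi:ℂ) * Complex.I * (4 * z)) = y ^ 4 := by
    rw [show 2 * (Real.pi:ℂ) * Complex.I * (4 * z)
        = ((4 : ℕ) : ℂ) * (2 * (Real.pi:ℂ) * Complex.I * z) by push_cast; ring,
      Complex.exp_nat_mul, ← hy]
  have hy4i : Complex.exp (-(2 * (Real.pi:ℂ) * Complex.I * (4 * z))) = y⁻¹ ^ 4 := by
    rw [show -(2 * (Real.pi:ℂ) * Complex.I * (4 * z))
        = ((4 : ℕ) : ℂ) * (-(2 * (Real.pi:ℂ) * Complex.I * z)) by push_cast; ring,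
      Complex.exp_nat_mul, Complex.exp_neg, ← hy]
  -- product expansions
  have hEta1 : Eta τ = Complex.exp (Real.pi * Complex.I * τ / 12) * ∏' n : ℕ, Gfam (-q) q n := by
    rw [Eta]
    congr 1
    refine tprod_congr fun n => ?_
    rw [hqn1 n, Gfam]; ring
  have hEta2 : Eta (2 * τ)
      = Complex.exp (Real.pi * Complex.I * (2 * τ) / 12) * ∏' n : ℕ, Gfam (-(q ^ 2)) (q ^ 2) n := by
    rw [Eta]
    congr 1
    refine tprod_congr fun n => ?_
    rw [hq2n1 n, Gfam]; ring
  have hEta4 : Eta (4 * τ)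
      = Complex.exp (Real.pi * Complex.I * (4 * τ) / 12) * ∏' n : ℕ, Gfam (-(q ^ 4)) (q ^ 4) n := by
    rw [Eta]
    congr 1
    refine tprod_congr fun n => ?_
    rw [hq4n1 n, Gfam]; ring
  have hTh1 : Theta1 τ (2 * z)
      = -Complex.I * Complex.exp (Real.pi * Complex.I * τ / 4)
          * Complex.exp (Real.pi * Complex.I * (2 * z))
          * ((∏' n : ℕ, Gfam (-(y⁻¹ ^ 2)) q n) * (∏' n : ℕ, Gfam (-(y ^ 2 * q)) q n)
              * ∏' n : ℕ, Gfam (-q) q n) := by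
    rw [Theta1]
    congr 1
    rw [← Multipliable.tprod_mul mB1 mB2, ← Multipliable.tprod_mul (mB1.mul mB2) mA1]
    refine tprod_congr fun n => ?_
    show _ = _
    rw [hy2i, hy2, hqn n, hqn1 n, Gfam, Gfam, Gfam]; ring
  have hTh2a : Theta2 (2 * τ) (4 * z)
      = Complex.exp (Real.pi * Complex.I * (2 * τ) / 4)
          * Complex.exp (Real.pi * Complex.I * (4 * z))
          * ((∏' n : ℕ, Gfam (y⁻¹ ^ 4) (q ^ 2) n) * (∏' n : ℕ, Gfam (y ^ 4 * q ^ 2) (q ^ 2) n)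
              * ∏' n : ℕ, Gfam (-(q ^ 2)) (q ^ 2) n) := by
    rw [Theta2]
    congr 1
    rw [← Multipliable.tprod_mul mC1 mC2, ← Multipliable.tprod_mul (mC1.mul mC2) mA2]
    refine tprod_congr fun n => ?_
    show _ = _
    rw [hy4i, hy4, hq2n n, hq2n1 n, Gfam, Gfam, Gfam]; ring
  have hTh2b : Theta2 (4 * τ) (4 * z)
      = Complex.exp (Real.pi * Complex.I * (4 * τ) / 4)
          * Complex.exp (Real.pi * Complex.I * (4 * z))
          * ((∏' n : ℕ, Gfam (y⁻¹ ^ 4) (q ^ 4) n) * (∏' n : ℕ, Gfam (y ^ 4 * q ^ 4) (q ^ 4) n)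
              * ∏' n : ℕ, Gfam (-(q ^ 4)) (q ^ 4) n) := by
    rw [Theta2]
    congr 1
    rw [← Multipliable.tprod_mul mD1 mD2, ← Multipliable.tprod_mul (mD1.mul mD2) mA4]
    refine tprod_congr fun n => ?_
    show _ = _
    rw [hy4i, hy4, hq4n n, hq4n1 n, Gfam, Gfam, Gfam]; ring
  -- per-term identity for the trace side
  have hterm : ∀ n : ℕ,
      ((1 - q ^ (n + 1)) ^ 2 * (1 - y⁻¹ ^ 2 * q ^ n) * (1 - Complex.I * y⁻¹ ^ 2 * q ^ n) *
          (1 + Complex.I * y⁻¹ ^ 2 * q ^ n) * (1 - y ^ 2 * q ^ (n + 1)) *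
          (1 - Complex.I * y ^ 2 * q ^ (n + 1)) * (1 + Complex.I * y ^ 2 * q ^ (n + 1)) /
        ((1 - zeta8 * y⁻¹ * q ^ n) * (1 - zeta8 * y * q ^ (n + 1)) *
          (1 - zeta8 ^ 3 * y⁻¹ * q ^ n) * (1 - zeta8 ^ 3 * y * q ^ (n + 1)) *
          (1 - zeta8 ^ 5 * y⁻¹ * q ^ n) * (1 - zeta8 ^ 5 * y * q ^ (n + 1)) *
          (1 - zeta8 ^ 7 * y⁻¹ * q ^ n) * (1 - zeta8 ^ 7 * y * q ^ (n + 1))))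
      = Gfam (-q) q n * Gfam (-q) q n * Gfam (-(y⁻¹ ^ 2)) q n * Gfam (y⁻¹ ^ 4) (q ^ 2) n *
          Gfam (-(y ^ 2 * q)) q n * Gfam (y ^ 4 * q ^ 2) (q ^ 2) n *
          (Gfam (y⁻¹ ^ 4) (q ^ 4) n)⁻¹ * (Gfam (y ^ 4 * q ^ 4) (q ^ 4) n)⁻¹ := by
    intro n
    have hQ : (1 - zeta8 * y⁻¹ * q ^ n) * (1 - zeta8 * y * q ^ (n + 1)) *
          (1 - zeta8 ^ 3 * y⁻¹ * q ^ n) * (1 - zeta8 ^ 3 * y * q ^ (n + 1)) *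
          (1 - zeta8 ^ 5 * y⁻¹ * q ^ n) * (1 - zeta8 ^ 5 * y * q ^ (n + 1)) *
          (1 - zeta8 ^ 7 * y⁻¹ * q ^ n) * (1 - zeta8 ^ 7 * y * q ^ (n + 1))
        = Gfam (y⁻¹ ^ 4) (q ^ 4) n * Gfam (y ^ 4 * q ^ 4) (q ^ 4) n := by
      have hz1 := zid (y⁻¹ * q ^ n)
      have hz2 := zid (y * q ^ (n + 1))
      simp only [Gfam]
      linear_combination
        ((1 - zeta8 * (y * q ^ (n + 1))) * (1 - zeta8 ^ 3 * (y * q ^ (n + 1))) *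
          (1 - zeta8 ^ 5 * (y * q ^ (n + 1))) * (1 - zeta8 ^ 7 * (y * q ^ (n + 1)))) * hz1 +
        (1 + (y⁻¹ * q ^ n) ^ 4) * hz2
    have hN : (1 - q ^ (n + 1)) ^ 2 * (1 - y⁻¹ ^ 2 * q ^ n) * (1 - Complex.I * y⁻¹ ^ 2 * q ^ n) *
          (1 + Complex.I * y⁻¹ ^ 2 * q ^ n) * (1 - y ^ 2 * q ^ (n + 1)) *
          (1 - Complex.I * y ^ 2 * q ^ (n + 1)) * (1 + Complex.I * y ^ 2 * q ^ (n + 1))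
        = Gfam (-q) q n * Gfam (-q) q n * Gfam (-(y⁻¹ ^ 2)) q n * Gfam (y⁻¹ ^ 4) (q ^ 2) n *
            Gfam (-(y ^ 2 * q)) q n * Gfam (y ^ 4 * q ^ 2) (q ^ 2) n := by
      simp only [Gfam]
      linear_combination
        ((1 - q ^ (n + 1)) ^ 2 * (1 - y⁻¹ ^ 2 * q ^ n) * (1 - y ^ 2 * q ^ (n + 1)) *
          ((y⁻¹ ^ 2 * q ^ n) ^ 2 * (y ^ 2 * q ^ (n + 1)) ^ 2 * (Complex.I ^ 2 - 1)
            - (y⁻¹ ^ 2 * q ^ n) ^ 2 - (y ^ 2 * q ^ (n + 1)) ^ 2)) * Complex.I_sq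
    rw [hQ, hN, div_eq_mul_inv, mul_inv, ← mul_assoc]
  rw [tprod_congr hterm]
  -- split the trace-side product
  have hM2 : Multipliable (fun n : ℕ => Gfam (-q) q n * Gfam (-q) q n) := mA1.mul mA1
  have hM3 : Multipliable (fun n : ℕ => Gfam (-q) q n * Gfam (-q) q n *
      Gfam (-(y⁻¹ ^ 2)) q n) := hM2.mul mB1
  have hM4 : Multipliable (fun n : ℕ => Gfam (-q) q n * Gfam (-q) q n *
      Gfam (-(y⁻¹ ^ 2)) q n * Gfam (y⁻¹ ^ 4) (q ^ 2) n) := hM3.mul mC1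
  have hM5 : Multipliable (fun n : ℕ => Gfam (-q) q n * Gfam (-q) q n *
      Gfam (-(y⁻¹ ^ 2)) q n * Gfam (y⁻¹ ^ 4) (q ^ 2) n * Gfam (-(y ^ 2 * q)) q n) := hM4.mul mB2
  have hM6 : Multipliable (fun n : ℕ => Gfam (-q) q n * Gfam (-q) q n *
      Gfam (-(y⁻¹ ^ 2)) q n * Gfam (y⁻¹ ^ 4) (q ^ 2) n * Gfam (-(y ^ 2 * q)) q n *
      Gfam (y ^ 4 * q ^ 2) (q ^ 2) n) := hM5.mul mC2
  have hM7 : Multipliable (fun n : ℕ => Gfam (-q) q n * Gfam (-q) q n *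
      Gfam (-(y⁻¹ ^ 2)) q n * Gfam (y⁻¹ ^ 4) (q ^ 2) n * Gfam (-(y ^ 2 * q)) q n *
      Gfam (y ^ 4 * q ^ 2) (q ^ 2) n * (Gfam (y⁻¹ ^ 4) (q ^ 4) n)⁻¹) := hM6.mul mD1i
  rw [Multipliable.tprod_mul hM7 mD2i, Multipliable.tprod_mul hM6 mD1i, Multipliable.tprod_mul hM5 mC2, Multipliable.tprod_mul hM4 mB2,
    Multipliable.tprod_mul hM3 mC1, Multipliable.tprod_mul hM2 mB1, Multipliable.tprod_mul mA1 mA1]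
  rw [hEta1, hEta4, hTh1, hTh2a, hEta2, hTh2b]
  have hrel1 : (∏' n : ℕ, Gfam (y⁻¹ ^ 4) (q ^ 4) n) * (∏' n : ℕ, (Gfam (y⁻¹ ^ 4) (q ^ 4) n)⁻¹) = 1 :=
    tprod_Gfam_mul_inv hcC1 hq4
  have hrel2 : (∏' n : ℕ, Gfam (y ^ 4 * q ^ 4) (q ^ 4) n) *
      (∏' n : ℕ, (Gfam (y ^ 4 * q ^ 4) (q ^ 4) n)⁻¹) = 1 := tprod_Gfam_mul_inv hcD2 hq4
  have hA2ne : (∏' n : ℕ, Gfam (-(q ^ 2)) (q ^ 2) n) ≠ 0 := tprod_Gfam_ne_zero hcA2 hq2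
  have hA4ne : (∏' n : ℕ, Gfam (-(q ^ 4)) (q ^ 4) n) ≠ 0 := tprod_Gfam_ne_zero hcA4 hq4
  have hD1ne : (∏' n : ℕ, Gfam (y⁻¹ ^ 4) (q ^ 4) n) ≠ 0 := tprod_Gfam_ne_zero hcC1 hq4
  have hD2ne : (∏' n : ℕ, Gfam (y ^ 4 * q ^ 4) (q ^ 4) n) ≠ 0 := tprod_Gfam_ne_zero hcD2 hq4
  have hkey : Complex.exp (Real.pi * Complex.I * τ / 12)
        * Complex.exp (Real.pi * Complex.I * (4 * τ) / 12)
        * Complex.exp (Real.pi * Complex.I * τ / 4)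
        * Complex.exp (Real.pi * Complex.I * (2 * z))
        * Complex.exp (Real.pi * Complex.I * (2 * τ) / 4)
        * Complex.exp (Real.pi * Complex.I * (4 * z))
      = y * (Complex.exp (Real.pi * Complex.I * (2 * τ) / 12)
        * Complex.exp (Real.pi * Complex.I * (4 * τ) / 4)
        * Complex.exp (Real.pi * Complex.I * (4 * z))) := by
    rw [hy]
    simp only [← Complex.exp_add]
    congr 1
    ring
  rw [eq_div_iff (mul_ne_zero
    (mul_ne_zero (Complex.exp_ne_zero _) hA2ne)
    (mul_ne_zero (mul_ne_zero (Complex.exp_ne_zero _) (Complex.exp_ne_zero _))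
      (mul_ne_zero (mul_ne_zero hD1ne hD2ne) hA4ne)))]
  linear_combination
    ((-2 * y * (Complex.exp (Real.pi * Complex.I * (2 * τ) / 12) * Complex.exp (Real.pi * Complex.I * (4 * τ) / 4) * Complex.exp (Real.pi * Complex.I * (4 * z))) * ((∏' n : ℕ, Gfam (-q) q n) * (∏' n : ℕ, Gfam (-q) q n) * (∏' n : ℕ, Gfam (-(y⁻¹ ^ 2)) q n) * (∏' n : ℕ, Gfam (y⁻¹ ^ 4) (q ^ 2) n) * (∏' n : ℕ, Gfam (-(y ^ 2 * q)) q n) * (∏' n : ℕ, Gfam (y ^ 4 * q ^ 2) (q ^ 2) n) * (∏' n : ℕ, Gfam (-(q ^ 2)) (q ^ 2) n) * (∏' n : ℕ, Gfam (-(q ^ 4)) (q ^ 4) n))) * ((∏' n : ℕ, Gfam (y ^ 4 * q ^ 4) (q ^ 4) n) * (∏' n : ℕ, (Gfam (y ^ 4 * q ^ 4) (q ^ 4) n)⁻¹))) * hrel1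
    + (-2 * y * (Complex.exp (Real.pi * Complex.I * (2 * τ) / 12) * Complex.exp (Real.pi * Complex.I * (4 * τ) / 4) * Complex.exp (Real.pi * Complex.I * (4 * z))) * ((∏' n : ℕ, Gfam (-q) q n) * (∏' n : ℕ, Gfam (-q) q n) * (∏' n : ℕ, Gfam (-(y⁻¹ ^ 2)) q n) * (∏' n : ℕ, Gfam (y⁻¹ ^ 4) (q ^ 2) n) * (∏' n : ℕ, Gfam (-(y ^ 2 * q)) q n) * (∏' n : ℕ, Gfam (y ^ 4 * q ^ 2) (q ^ 2) n) * (∏' n : ℕ, Gfam (-(q ^ 2)) (q ^ 2) n) * (∏' n : ℕ, Gfam (-(q ^ 4)) (q ^ 4) n))) * hrel2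
    + (-2 * (Complex.exp (Real.pi * Complex.I * τ / 12) * Complex.exp (Real.pi * Complex.I * (4 * τ) / 12) * Complex.exp (Real.pi * Complex.I * τ / 4) * Complex.exp (Real.pi * Complex.I * (2 * z)) * Complex.exp (Real.pi * Complex.I * (2 * τ) / 4) * Complex.exp (Real.pi * Complex.I * (4 * z))) * ((∏' n : ℕ, Gfam (-q) q n) * (∏' n : ℕ, Gfam (-q) q n) * (∏' n : ℕ, Gfam (-(q ^ 4)) (q ^ 4) n) * (∏' n : ℕ, Gfam (-(y⁻¹ ^ 2)) q n) * (∏' n : ℕ, Gfam (-(y ^ 2 * q)) q n) * (∏' n : ℕ, Gfam (y⁻¹ ^ 4) (q ^ 2) n) * (∏' n : ℕ, Gfam (y ^ 4 * q ^ 2) (q ^ 2) n) * (∏' n : ℕ, Gfam (-(q ^ 2)) (q ^ 2) n))) * Complex.I_sq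
    + (2 * ((∏' n : ℕ, Gfam (-q) q n) * (∏' n : ℕ, Gfam (-q) q n) * (∏' n : ℕ, Gfam (-(q ^ 4)) (q ^ 4) n) * (∏' n : ℕ, Gfam (-(y⁻¹ ^ 2)) q n) * (∏' n : ℕ, Gfam (-(y ^ 2 * q)) q n) * (∏' n : ℕ, Gfam (y⁻¹ ^ 4) (q ^ 2) n) * (∏' n : ℕ, Gfam (y ^ 4 * q ^ 2) (q ^ 2) n) * (∏' n : ℕ, Gfam (-(q ^ 2)) (q ^ 2) n))) * hkey
end

section
/- For all τ, z in the stated domain, the following identity holds: −y ∏_{n≥1} (1−q^n)² ∏_{k∈{1,2,4}} (1−ζ₇^{−k}y⁻²q^{n−1}) (1−ζ₇^{k}y²q^n) / [ (1+y⁻¹q^{n−1})(1+yq^n) ∏_{k∈{1,2,4}} (1+ζ₇^{−k}y⁻¹q^{n−1}) (1+ζ₇^{k}yq^n) ] − y ∏_{n≥1} (1−q^n)² ∏_{k∈{1,2,4}} (1−ζ₇^{k}y⁻²q^{n−1}) (1−ζ₇^{−k}y²q^n) / [ (1+y⁻¹q^{n−1})(1+yq^n) ∏_{k∈{1,2,4}}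 (1+ζ₇^{k}y⁻¹q^{n−1}) (1+ζ₇^{−k}yq^n) ] = i ( η(7τ) / ( η(τ)⁴ θ₂(7τ,7z) ) ) · [ θ₁(τ,2z+1/7) θ₁(τ,2z+2/7) θ₁(τ,2z+4/7) θ₂(τ,z−1/7) θ₂(τ,z−2/7) θ₂(τ,z−4/7) + θ₁(τ,2z−1/7) θ₁(τ,2z−2/7) θ₁(τ,2z−4/7) θ₂(τ,z+1/7) θ₂(τ,z+2/7) θ₂(τ,z+4/7) ]. (This is the identity establishing that the graded trace attached to the classes 14A and 14B of the umbral group G⁽⁴⁾ equals the umbral meromorphic Jacobi form ψ⁽⁴⁾_{14AB}.) -/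
open Complex

/-- A primitive seventh root of unity, `ζ₇ = e^{2πi/7}`. -/
noncomputable def zeta7 : ℂ := Complex.exp (2 * Real.pi * Complex.I / 7)


open Complex Filter

/-- geometric summability -/
lemma sgeo (c x : ℂ) (hx : ‖x‖ < 1) : Summable (fun n : ℕ => c * x ^ n) :=
  (summable_geometric_of_norm_lt_one hx).mul_left c

lemma sbin (c x : ℂ) (hx : ‖x‖ < 1) (f : ℕ → ℂ) (hf : ∀ n, f n = 1 + c * x ^ n) :
    Summable (fun n => f n - 1) :=
  (sgeo c x hx).congr (fun n => by rw [hf n]; ring)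

lemma scongr {f g : ℕ → ℂ} (hf : Summable (fun n => f n - 1)) (h : ∀ n, g n = f n) :
    Summable (fun n => g n - 1) := hf.congr (fun n => by rw [h n])

/-- product of two "1+small" families -/
lemma smul {f g : ℕ → ℂ} (hf : Summable (fun n => f n - 1)) (hg : Summable (fun n => g n - 1)) :
    Summable (fun n => f n * g n - 1) := by
  have hev : ∀ᶠ n in atTop, ‖(f n - 1) * (g n - 1)‖ ≤ ‖f n - 1‖ := by
    filter_upwards [((show Filter.Tendsto (fun n => ‖g n - 1‖) Filter.atTop (nhds 0) by simpa using hg.tendsto_atTop_zero.norm).eventually_le_const zero_lt_one)] with n h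
    rw [norm_mul]
    calc ‖f n - 1‖ * ‖g n - 1‖ ≤ ‖f n - 1‖ * 1 := by
          exact mul_le_mul_of_nonneg_left h (norm_nonneg _)
      _ = ‖f n - 1‖ := mul_one _
  have h1 : Summable (fun n => (f n - 1) * (g n - 1)) :=
    Summable.of_norm_bounded_eventually_nat hf.norm hev
  exact ((h1.add hf).add hg).congr (fun n => by ring)

/-- nonvanishing binomial -/
lemma bne0 (c x : ℂ) (hc : ‖c‖ < 1) (hx : ‖x‖ ≤ 1) (n : ℕ) : 1 + c * x ^ n ≠ 0 := by
  intro h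
  have h2 : ‖c * x ^ n‖ < 1 := by
    rw [norm_mul, norm_pow]
    calc ‖c‖ * ‖x‖ ^ n ≤ ‖c‖ * 1 := by
          exact mul_le_mul_of_nonneg_left (pow_le_one₀ (norm_nonneg _) hx) (norm_nonneg _)
      _ = ‖c‖ := mul_one _
      _ < 1 := hc
  have h3 : c * x ^ n = -1 := by linear_combination h
  rw [h3, norm_neg, norm_one] at h2
  exact lt_irrefl _ h2

/-- log summability -/
lemma slog {f : ℕ → ℂ} (hf : Summable (fun n => f n - 1)) :
    Summable (fun n => Complex.log (f n)) := by
  have hev : ∀ᶠ n in atTop, ‖Complex.log (f n)‖ ≤ 3/2 * ‖f n - 1‖ := by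
    filter_upwards [((show Filter.Tendsto (fun n => ‖f n - 1‖) Filter.atTop (nhds 0) by simpa using hf.tendsto_atTop_zero.norm).eventually_le_const (by norm_num : (0:ℝ) < 1/2))]
      with n h
    have := Complex.norm_log_one_add_half_le_self (z := f n - 1) (by simpa using h)
    simpa using this
  exact Summable.of_norm_bounded_eventually_nat (hf.norm.mul_left (3/2)) hev

/-- core: HasProd with exp of log sum -/
lemma core {f : ℕ → ℂ} (hf : Summable (fun n => f n - 1)) (h0 : ∀ n, f n ≠ 0) :
    HasProd f (Complex.exp (∑' n, Complex.log (f n))) := by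
  have h := (slog hf).hasSum.cexp
  have h2 : (cexp ∘ fun n => Complex.log (f n)) = f := funext fun n => Complex.exp_log (h0 n)
  rwa [h2] at h

lemma tne {f : ℕ → ℂ} (hf : Summable (fun n => f n - 1)) (h0 : ∀ n, f n ≠ 0) :
    (∏' n, f n) ≠ 0 := by
  rw [(core hf h0).tprod_eq]; exact Complex.exp_ne_zero _

lemma hasProd_zero {f : ℕ → ℂ} (m : ℕ) (h : f m = 0) : HasProd f 0 := by
  have : ∀ᶠ s : Finset ℕ in atTop, (∏ i ∈ s, f i) = 0 := by
    filter_upwards [Filter.eventually_ge_atTop {m}] with s hs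
    exact Finset.prod_eq_zero (by simpa using hs) h
  exact (tendsto_const_nhds : Tendsto (fun _ : Finset ℕ => (0:ℂ)) atTop _).congr'
    (this.mono fun s hs => hs.symm)

lemma mlt {f : ℕ → ℂ} (hf : Summable (fun n => f n - 1)) : Multipliable f := by
  by_cases h0 : ∀ n, f n ≠ 0
  · exact (core hf h0).multipliable
  · push_neg at h0
    obtain ⟨m, hm⟩ := h0
    exact ⟨0, hasProd_zero m hm⟩

lemma tmul' {f g : ℕ → ℂ} (hf : Summable (fun n => f n - 1)) (hg : Summable (fun n => g n - 1)) :
    (∏' n, f n) * (∏' n, g n) = ∏' n, (f n * g n) :=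
  ((mlt hf).tprod_mul (mlt hg)).symm

lemma sdiv {f g : ℕ → ℂ} (hf : Summable (fun n => f n - 1)) (hg : Summable (fun n => g n - 1))
    (hg0 : ∀ n, g n ≠ 0) : Summable (fun n => f n / g n - 1) := by
  have hev : ∀ᶠ n in Filter.atTop, ‖f n / g n - 1‖ ≤ 2 * (‖f n - 1‖ + ‖g n - 1‖) := by
    filter_upwards [((show Filter.Tendsto (fun n => ‖g n - 1‖) Filter.atTop (nhds 0) by
      simpa using hg.tendsto_atTop_zero.norm).eventually_le_const (by norm_num : (0:ℝ) < 1/2))]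
      with n h
    have hglb : (1:ℝ)/2 ≤ ‖g n‖ := by
      have h2 := norm_sub_norm_le (1:ℂ) (1 - g n)
      rw [norm_one, sub_sub_cancel] at h2
      rw [norm_sub_rev] at h2
      linarith
    have hfg : (f n - g n) / g n = f n / g n - 1 := by
      rw [sub_div, div_self (hg0 n)]
    rw [← hfg, norm_div]
    rw [div_le_iff₀ (by linarith : (0:ℝ) < ‖g n‖)]
    have h1 : ‖f n - g n‖ ≤ ‖f n - 1‖ + ‖g n - 1‖ := by
      calc ‖f n - g n‖ = ‖(f n - 1) - (g n - 1)‖ := by ring_nf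
        _ ≤ ‖f n - 1‖ + ‖g n - 1‖ := norm_sub_le _ _
    calc ‖f n - g n‖ ≤ ‖f n - 1‖ + ‖g n - 1‖ := h1
      _ = (2 * (‖f n - 1‖ + ‖g n - 1‖)) * (1/2) := by ring
      _ ≤ (2 * (‖f n - 1‖ + ‖g n - 1‖)) * ‖g n‖ := by
          apply mul_le_mul_of_nonneg_left hglb
          positivity
  exact Summable.of_norm_bounded_eventually_nat (((hf.norm.add hg.norm).mul_left 2)) hev

lemma qdiv {f g : ℕ → ℂ} (hf : Summable (fun n => f n - 1)) (hg : Summable (fun n => g n - 1))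
    (hg0 : ∀ n, g n ≠ 0) : (∏' n, (f n / g n)) = (∏' n, f n) / (∏' n, g n) := by
  have hgn : (∏' n, g n) ≠ 0 := tne hg hg0
  have key : (∏' n, (f n / g n)) * (∏' n, g n) = ∏' n, f n := by
    rw [tmul' (sdiv hf hg hg0) hg]
    exact tprod_congr (fun n => div_mul_cancel₀ _ (hg0 n))
  field_simp [← key]
  exact key

lemma bne' (c x : ℂ) (hc : ‖c‖ < 1) (hx : ‖x‖ ≤ 1) (n : ℕ) (v : ℂ)
    (hv : v = 1 + c * x ^ n) : v ≠ 0 := by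
  rw [hv]; exact bne0 c x hc hx n


lemma seven (b c t : ℂ) (hb : b * c = 1)
    (hsum : 1 + c + c^2 + c^3 + c^4 + c^5 + c^6 = 0) :
    (1+t)*(1+c*t)*(1+c^2*t)*(1+c^4*t)*(1+b*t)*(1+b^2*t)*(1+b^4*t) = 1 + t^7 := by
  have h7 : c^7 = 1 := by linear_combination (c-1)*hsum
  have hbe : b = c^6 := by linear_combination c^6*hb - b*h7
  rw [hbe]
  linear_combination (t + 3*t^2 + 5*t^3 + 5*t^4 + 3*t^5 + t^6) * hsum + (3*t^2 + 5*t^3 + 5*t^4 + 3*t^5 + t^6 + t^7 + 2*c*t^2 + 5*c*t^3 + 5*c*t^4 + 3*c*t^5 + c*t^6 + 2*c^2*t^2 + 5*c^2*t^3 + 5*c^2*t^4 + 3*c^2*t^5 + c^2*t^6 + c^3*t + 2*c^3*t^2 + 4*c^3*t^3 + 5*c^3*t^4 + 3*c^3*t^5 + c^3*t^6 + 2*c^4*t^2 + 5*c^4*t^3 + 5*c^4*t^4 + 3*c^4*t^5 + c^4*t^6 + c^5*t + 2*c^5*t^2 + 4*c^5*t^3 + 5*c^5*t^4 + 3*c^5*t^5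 + c^5*t^6 + c^6*t^2 + 4*c^6*t^3 + 5*c^6*t^4 + 3*c^6*t^5 + c^6*t^6 + 2*c^7*t^2 + 3*c^7*t^3 + 4*c^7*t^4 + 3*c^7*t^5 + c^7*t^6 + c^7*t^7 + c^8*t^2 + 4*c^8*t^3 + 5*c^8*t^4 + 3*c^8*t^5 + c^8*t^6 + 2*c^9*t^2 + 4*c^9*t^3 + 4*c^9*t^4 + 3*c^9*t^5 + c^9*t^6 + c^10*t + c^10*t^2 + 3*c^10*t^3 + 5*c^10*t^4 + 3*c^10*t^5 + c^10*t^6 + 2*c^11*t^2 + 4*c^11*t^3 + 4*c^11*t^4 + 3*c^11*t^5 + c^11*t^6 + c^12*t^2 + 3*c^12*t^3 + 4*c^12*t^4 + 3*c^12*t^5 + c^12*t^6 + 3*c^13*t^3 + 4*c^13*t^4 + 2*c^13*t^5 + c^13*t^6 + c^14*t^2 + 2*c^14*t^3 + 4*c^14*t^4 + 3*c^14*t^5 + c^14*t^6 + c^14*t^7 + c^15*t^2 + 3*c^15*t^3 + 4*c^15*t^4 + 3*c^15*t^5 + c^15*t^6 + c^16*t^2 + 3*c^16*t^3 + 4*c^16*t^4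 + 3*c^16*t^5 + c^16*t^6 + c^17*t + c^17*t^2 + 2*c^17*t^3 + 4*c^17*t^4 + 3*c^17*t^5 + c^17*t^6 + c^18*t^2 + 2*c^18*t^3 + 3*c^18*t^4 + 3*c^18*t^5 + c^18*t^6 + c^19*t^2 + 2*c^19*t^3 + 2*c^19*t^4 + 2*c^19*t^5 + c^19*t^6 + 2*c^20*t^3 + 3*c^20*t^4 + 2*c^20*t^5 + c^20*t^6 + c^21*t^2 + 2*c^21*t^3 + 3*c^21*t^4 + 2*c^21*t^5 + c^21*t^6 + c^21*t^7 + c^22*t^2 + 2*c^22*t^3 + 3*c^22*t^4 + 3*c^22*t^5 + c^22*t^6 + c^23*t^2 + 3*c^23*t^3 + 3*c^23*t^4 + 2*c^23*t^5 + c^23*t^6 + 2*c^24*t^3 + 3*c^24*t^4 + 2*c^24*t^5 + c^24*t^6 + c^25*t^3 + 3*c^25*t^4 + 2*c^25*t^5 + c^26*t^3 + 2*c^26*t^4 + 2*c^26*t^5 + c^26*t^6 + c^27*t^3 + 2*c^27*t^4 + 2*c^27*t^5 + c^27*t^6 + c^28*t^3 + 3*c^28*t^4 + 2*c^28*t^5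 + c^28*t^6 + c^28*t^7 + c^29*t^2 + c^29*t^3 + 2*c^29*t^4 + 3*c^29*t^5 + c^29*t^6 + c^30*t^3 + 2*c^30*t^4 + 2*c^30*t^5 + c^30*t^6 + c^31*t^3 + c^31*t^4 + c^31*t^5 + c^31*t^6 + 2*c^32*t^4 + 2*c^32*t^5 + c^33*t^3 + c^33*t^4 + c^33*t^5 + c^33*t^6 + c^34*t^4 + 2*c^34*t^5 + c^34*t^6 + c^35*t^3 + 2*c^35*t^4 + c^35*t^5 + c^35*t^6 + c^35*t^7 + c^36*t^4 + 2*c^36*t^5 + c^36*t^6 + c^37*t^4 + c^37*t^5 + c^38*t^5 + c^38*t^6 + c^39*t^4 + c^39*t^5 + c^40*t^5 + c^40*t^6 + c^41*t^5 + c^41*t^6 + c^42*t^6 + c^42*t^7) * h7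



lemma final_abstract (u w ε PS PE PW PT1 PT2 PT4 PU1 PU2 PU4 : ℂ)
    (hu : u ≠ 0) (hw : w ≠ 0) (hε0 : ε ≠ 0) (hPE : PE ≠ 0) (hPW : PW ≠ 0)
    (hε7 : ε ^ 7 = -1) :
    (-(w ^ 2)) * (PS * (PT1 * PT2 * PT4 * PU1 * PU2 * PU4) / (PE ^ 4 * PW)) =
    Complex.I * (u ^ 7 * PS / ((u * PE) ^ 4 * (u ^ 21 * w ^ 7 * PW))) *
      (-Complex.I * u ^ 3 * (w ^ 2 * ε) * PT1 * (-Complex.I * u ^ 3 * (w ^ 2 * ε ^ 2) * PT2) *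
        (-Complex.I * u ^ 3 * (w ^ 2 * ε ^ 4) * PT4) * (u ^ 3 * (w * ε⁻¹) * PU1) *
        (u ^ 3 * (w * ε⁻¹ ^ 2) * PU2) * (u ^ 3 * (w * ε⁻¹ ^ 4) * PU4)) := by
  have hI : Complex.I ^ 2 = -1 := Complex.I_sq
  have hεinv : ε⁻¹ = -(ε ^ 6) := by
    field_simp
    linear_combination hε7
  rw [hεinv]
  rw [show (-(w ^ 2)) * (PS * (PT1 * PT2 * PT4 * PU1 * PU2 * PU4) / (PE ^ 4 * PW)) =
      (-(w ^ 2) * (PS * (PT1 * PT2 * PT4 * PU1 * PU2 * PU4))) / (PE ^ 4 * PW) from by ring]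
  rw [show Complex.I * (u ^ 7 * PS / ((u * PE) ^ 4 * (u ^ 21 * w ^ 7 * PW))) *
      (-Complex.I * u ^ 3 * (w ^ 2 * ε) * PT1 * (-Complex.I * u ^ 3 * (w ^ 2 * ε ^ 2) * PT2) *
        (-Complex.I * u ^ 3 * (w ^ 2 * ε ^ 4) * PT4) * (u ^ 3 * (w * -(ε ^ 6)) * PU1) *
        (u ^ 3 * (w * (-(ε ^ 6)) ^ 2) * PU2) * (u ^ 3 * (w * (-(ε ^ 6)) ^ 4) * PU4)) =
      (Complex.I * (u ^ 7 * PS) *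
      (-Complex.I * u ^ 3 * (w ^ 2 * ε) * PT1 * (-Complex.I * u ^ 3 * (w ^ 2 * ε ^ 2) * PT2) *
        (-Complex.I * u ^ 3 * (w ^ 2 * ε ^ 4) * PT4) * (u ^ 3 * (w * -(ε ^ 6)) * PU1) *
        (u ^ 3 * (w * (-(ε ^ 6)) ^ 2) * PU2) * (u ^ 3 * (w * (-(ε ^ 6)) ^ 4) * PU4))) /
        ((u * PE) ^ 4 * (u ^ 21 * w ^ 7 * PW)) from by ring]
  rw [div_eq_div_iff (mul_ne_zero (pow_ne_zero 4 hPE) hPW)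
    (mul_ne_zero (pow_ne_zero 4 (mul_ne_zero hu hPE))
      (mul_ne_zero (mul_ne_zero (pow_ne_zero 21 hu) (pow_ne_zero 7 hw)) hPW))]
  linear_combination
    (-(u ^ 25) * w ^ 9 * (PS * PT1 * PT2 * PT4 * PU1 * PU2 * PU4 * PE ^ 4 * PW) *
      (ε ^ 42 - ε ^ 35 + ε ^ 28 - ε ^ 21 + ε ^ 14 - ε ^ 7 + 1)) * hε7 +
    (-(u ^ 25) * w ^ 9 * (PS * PT1 * PT2 * PT4 * PU1 * PU2 * PU4 * PE ^ 4 * PW) * ε ^ 49 *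
      (Complex.I ^ 2 - 1)) * hI

set_option maxHeartbeats 4000000

lemma master (τ z q y : ℂ)
    (hq : q = Complex.exp (2 * Real.pi * Complex.I * τ))
    (hy : y = Complex.exp (2 * Real.pi * Complex.I * z))
    (hqn : ‖q‖ < 1) (hyi : ‖y⁻¹‖ < 1) (hyq : ‖y * q‖ < 1)
    (b c ε d1 d2 d4 : ℂ)
    (hd2 : d2 = 2 * d1) (hd4 : d4 = 4 * d1)
    (hε : Complex.exp (Real.pi * Complex.I * d1) = ε)
    (hεn : ‖ε‖ = 1) (hε7 : ε ^ 7 = -1) (hc : c = ε ^ 2) (hb : b * c = 1)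
    (hsum : 1 + c + c ^ 2 + c ^ 3 + c ^ 4 + c ^ 5 + c ^ 6 = 0) :
    -y * (∏' n : ℕ, ((1 - q ^ (n + 1)) ^ 2 * (1 - b * y⁻¹ ^ 2 * q ^ n) * (1 - b ^ 2 * y⁻¹ ^ 2 * q ^ n) * (1 - b ^ 4 * y⁻¹ ^ 2 * q ^ n) * (1 - c * y ^ 2 * q ^ (n + 1)) * (1 - c ^ 2 * y ^ 2 * q ^ (n + 1)) * (1 - c ^ 4 * y ^ 2 * q ^ (n + 1)) / ((1 + y⁻¹ * q ^ n) * (1 + y * q ^ (n + 1)) * (1 + b * y⁻¹ * q ^ n) * (1 + b ^ 2 * y⁻¹ * q ^ n) * (1 + b ^ 4 * y⁻¹ * q ^ n) * (1 + c * y * q ^ (n + 1)) * (1 + c ^ 2 * y * q ^ (n + 1)) * (1 + c ^ 4 * y * q ^ (n + 1)))))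
    = Complex.I * (Eta (7 * τ) / (Eta τ ^ 4 * Theta2 (7 * τ) (7 * z))) *
      (Theta1 τ (2 * z + d1) * Theta1 τ (2 * z + d2) * Theta1 τ (2 * z + d4) *
        Theta2 τ (z - d1) * Theta2 τ (z - d2) * Theta2 τ (z - d4)) := by
  subst hd2 hd4
  have hy0 : y ≠ 0 := by rw [hy]; exact Complex.exp_ne_zero _
  have hq0 : q ≠ 0 := by rw [hq]; exact Complex.exp_ne_zero _
  have hε0 : ε ≠ 0 := by rw [← hε]; exact Complex.exp_ne_zero _
  have hc0 : c ≠ 0 := by rw [hc]; exact pow_ne_zero _ hε0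
  have hcb : c * b = 1 := by linear_combination hb
  have hbinv : c⁻¹ = b := inv_eq_of_mul_eq_one_right hcb
  have hcn : ‖c‖ = 1 := by rw [hc, norm_pow, hεn, one_pow]
  have hbn : ‖b‖ = 1 := by
    have h := congrArg norm hb
    rw [norm_mul, hcn, mul_one, norm_one] at h
    exact h
  have hq7 : ‖q ^ 7‖ < 1 := by
    rw [norm_pow]; exact pow_lt_one₀ (norm_nonneg _) hqn (by norm_num)
  have hqle : ‖q‖ ≤ 1 := hqn.le
  have hq7le : ‖q ^ 7‖ ≤ 1 := hq7.le
  -- exponential rewrites for powers of q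
  have eqn : ∀ n : ℕ, Complex.exp (2 * Real.pi * Complex.I * (n : ℂ) * τ) = q ^ n := fun n => by
    rw [hq, ← Complex.exp_nat_mul]; congr 1; push_cast; ring
  have eqn1 : ∀ n : ℕ, Complex.exp (2 * Real.pi * Complex.I * ((n : ℂ) + 1) * τ) = q ^ (n + 1) :=
    fun n => by rw [hq, ← Complex.exp_nat_mul]; congr 1; push_cast; ring
  have eqn7 : ∀ n : ℕ, Complex.exp (2 * Real.pi * Complex.I * (n : ℂ) * (7 * τ)) = q ^ (7 * n) :=
    fun n => by rw [hq, ← Complex.exp_nat_mul]; congr 1; push_cast; ring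
  have eqn71 : ∀ n : ℕ,
      Complex.exp (2 * Real.pi * Complex.I * ((n : ℂ) + 1) * (7 * τ)) = q ^ (7 * n + 7) :=
    fun n => by rw [hq, ← Complex.exp_nat_mul]; congr 1; push_cast; ring
  -- constants
  have base1 : Complex.exp (2 * Real.pi * Complex.I * (2 * z + d1)) = c * y ^ 2 := by
    rw [hc, ← hε, hy]; simp only [← Complex.exp_nat_mul, ← Complex.exp_add]
    congr 1; push_cast; ring
  have base2 : Complex.exp (2 * Real.pi * Complex.I * (2 * z + 2 * d1)) = c ^ 2 * y ^ 2 := by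
    rw [hc, ← hε, hy]; simp only [← Complex.exp_nat_mul, ← Complex.exp_add]
    congr 1; push_cast; ring
  have base4 : Complex.exp (2 * Real.pi * Complex.I * (2 * z + 4 * d1)) = c ^ 4 * y ^ 2 := by
    rw [hc, ← hε, hy]; simp only [← Complex.exp_nat_mul, ← Complex.exp_add]
    congr 1; push_cast; ring
  have K1 : Complex.exp (-(2 * Real.pi * Complex.I * (2 * z + d1))) = b * y⁻¹ ^ 2 := by
    rw [Complex.exp_neg, base1, mul_inv, hbinv, ← inv_pow]
  have K2 : Complex.exp (-(2 * Real.pi * Complex.I * (2 * z + 2 * d1))) = b ^ 2 * y⁻¹ ^ 2 := by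
    rw [Complex.exp_neg, base2, mul_inv, ← inv_pow c 2, hbinv, ← inv_pow]
  have K4 : Complex.exp (-(2 * Real.pi * Complex.I * (2 * z + 4 * d1))) = b ^ 4 * y⁻¹ ^ 2 := by
    rw [Complex.exp_neg, base4, mul_inv, ← inv_pow c 4, hbinv, ← inv_pow]
  have M1 : Complex.exp (-(2 * Real.pi * Complex.I * (z - d1))) = c * y⁻¹ := by
    rw [hc, ← hε, hy]
    simp only [← Complex.exp_nat_mul, ← Complex.exp_neg, ← Complex.exp_add]
    congr 1; push_cast; ring
  have M2 : Complex.exp (-(2 * Real.pi * Complex.I * (z - 2 * d1))) = c ^ 2 * y⁻¹ := by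
    rw [hc, ← hε, hy]
    simp only [← Complex.exp_nat_mul, ← Complex.exp_neg, ← Complex.exp_add]
    congr 1; push_cast; ring
  have M4 : Complex.exp (-(2 * Real.pi * Complex.I * (z - 4 * d1))) = c ^ 4 * y⁻¹ := by
    rw [hc, ← hε, hy]
    simp only [← Complex.exp_nat_mul, ← Complex.exp_neg, ← Complex.exp_add]
    congr 1; push_cast; ring
  have M1' : Complex.exp (2 * Real.pi * Complex.I * (z - d1)) = b * y := by
    rw [← hbinv, hc, ← hε, hy]
    simp only [← Complex.exp_nat_mul, ← Complex.exp_neg, ← Complex.exp_add]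
    congr 1; push_cast; ring
  have M2' : Complex.exp (2 * Real.pi * Complex.I * (z - 2 * d1)) = b ^ 2 * y := by
    rw [show b ^ 2 = (c⁻¹) ^ 2 by rw [hbinv], hc, ← hε, hy]
    simp only [← Complex.exp_nat_mul, ← Complex.exp_neg, ← Complex.exp_add]
    congr 1; push_cast; ring
  have M4' : Complex.exp (2 * Real.pi * Complex.I * (z - 4 * d1)) = b ^ 4 * y := by
    rw [show b ^ 4 = (c⁻¹) ^ 4 by rw [hbinv], hc, ← hε, hy]
    simp only [← Complex.exp_nat_mul, ← Complex.exp_neg, ← Complex.exp_add]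
    congr 1; push_cast; ring
  have Z7 : Complex.exp (-(2 * Real.pi * Complex.I * (7 * z))) = y⁻¹ ^ 7 := by
    rw [hy]
    simp only [← Complex.exp_nat_mul, ← Complex.exp_neg]
    congr 1; push_cast; ring
  have Z7' : Complex.exp (2 * Real.pi * Complex.I * (7 * z)) = y ^ 7 := by
    rw [hy]
    simp only [← Complex.exp_nat_mul]
    congr 1; push_cast; ring
  -- summability of the elementary factors
  have hsE : Summable (fun n : ℕ => (1 - q ^ (n + 1)) - 1) :=
    sbin (-q) q hqn (fun n : ℕ => (1 - q ^ (n + 1))) (fun n => by ring)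
  have hsA1 : Summable (fun n : ℕ => (1 - b * y⁻¹ ^ 2 * q ^ n) - 1) :=
    sbin (-(b * y⁻¹ ^ 2)) q hqn (fun n : ℕ => (1 - b * y⁻¹ ^ 2 * q ^ n)) (fun n => by ring)
  have hsA2 : Summable (fun n : ℕ => (1 - b ^ 2 * y⁻¹ ^ 2 * q ^ n) - 1) :=
    sbin (-(b ^ 2 * y⁻¹ ^ 2)) q hqn (fun n : ℕ => (1 - b ^ 2 * y⁻¹ ^ 2 * q ^ n)) (fun n => by ring)
  have hsA4 : Summable (fun n : ℕ => (1 - b ^ 4 * y⁻¹ ^ 2 * q ^ n) - 1) :=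
    sbin (-(b ^ 4 * y⁻¹ ^ 2)) q hqn (fun n : ℕ => (1 - b ^ 4 * y⁻¹ ^ 2 * q ^ n)) (fun n => by ring)
  have hsB1 : Summable (fun n : ℕ => (1 - c * y ^ 2 * q ^ (n + 1)) - 1) :=
    sbin (-(c * y ^ 2 * q)) q hqn (fun n : ℕ => (1 - c * y ^ 2 * q ^ (n + 1))) (fun n => by ring)
  have hsB2 : Summable (fun n : ℕ => (1 - c ^ 2 * y ^ 2 * q ^ (n + 1)) - 1) :=
    sbin (-(c ^ 2 * y ^ 2 * q)) q hqn (fun n : ℕ => (1 - c ^ 2 * y ^ 2 * q ^ (n + 1))) (fun n => by ring)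
  have hsB4 : Summable (fun n : ℕ => (1 - c ^ 4 * y ^ 2 * q ^ (n + 1)) - 1) :=
    sbin (-(c ^ 4 * y ^ 2 * q)) q hqn (fun n : ℕ => (1 - c ^ 4 * y ^ 2 * q ^ (n + 1))) (fun n => by ring)
  have hsu0 : Summable (fun n : ℕ => (1 + y⁻¹ * q ^ n) - 1) :=
    sbin y⁻¹ q hqn (fun n : ℕ => (1 + y⁻¹ * q ^ n)) (fun n => by ring)
  have hsv0 : Summable (fun n : ℕ => (1 + y * q ^ (n + 1)) - 1) :=
    sbin (y * q) q hqn (fun n : ℕ => (1 + y * q ^ (n + 1))) (fun n => by ring)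
  have hsub1 : Summable (fun n : ℕ => (1 + b * y⁻¹ * q ^ n) - 1) :=
    sbin (b * y⁻¹) q hqn (fun n : ℕ => (1 + b * y⁻¹ * q ^ n)) (fun n => by ring)
  have hsub2 : Summable (fun n : ℕ => (1 + b ^ 2 * y⁻¹ * q ^ n) - 1) :=
    sbin (b ^ 2 * y⁻¹) q hqn (fun n : ℕ => (1 + b ^ 2 * y⁻¹ * q ^ n)) (fun n => by ring)
  have hsub4 : Summable (fun n : ℕ => (1 + b ^ 4 * y⁻¹ * q ^ n) - 1) :=
    sbin (b ^ 4 * y⁻¹) q hqn (fun n : ℕ => (1 + b ^ 4 * y⁻¹ * q ^ n)) (fun n => by ring)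
  have hsuc1 : Summable (fun n : ℕ => (1 + c * y⁻¹ * q ^ n) - 1) :=
    sbin (c * y⁻¹) q hqn (fun n : ℕ => (1 + c * y⁻¹ * q ^ n)) (fun n => by ring)
  have hsuc2 : Summable (fun n : ℕ => (1 + c ^ 2 * y⁻¹ * q ^ n) - 1) :=
    sbin (c ^ 2 * y⁻¹) q hqn (fun n : ℕ => (1 + c ^ 2 * y⁻¹ * q ^ n)) (fun n => by ring)
  have hsuc4 : Summable (fun n : ℕ => (1 + c ^ 4 * y⁻¹ * q ^ n) - 1) :=
    sbin (c ^ 4 * y⁻¹) q hqn (fun n : ℕ => (1 + c ^ 4 * y⁻¹ * q ^ n)) (fun n => by ring)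
  have hsvb1 : Summable (fun n : ℕ => (1 + b * y * q ^ (n + 1)) - 1) :=
    sbin (b * y * q) q hqn (fun n : ℕ => (1 + b * y * q ^ (n + 1))) (fun n => by ring)
  have hsvb2 : Summable (fun n : ℕ => (1 + b ^ 2 * y * q ^ (n + 1)) - 1) :=
    sbin (b ^ 2 * y * q) q hqn (fun n : ℕ => (1 + b ^ 2 * y * q ^ (n + 1))) (fun n => by ring)
  have hsvb4 : Summable (fun n : ℕ => (1 + b ^ 4 * y * q ^ (n + 1)) - 1) :=
    sbin (b ^ 4 * y * q) q hqn (fun n : ℕ => (1 + b ^ 4 * y * q ^ (n + 1))) (fun n => by ring)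
  have hsvc1 : Summable (fun n : ℕ => (1 + c * y * q ^ (n + 1)) - 1) :=
    sbin (c * y * q) q hqn (fun n : ℕ => (1 + c * y * q ^ (n + 1))) (fun n => by ring)
  have hsvc2 : Summable (fun n : ℕ => (1 + c ^ 2 * y * q ^ (n + 1)) - 1) :=
    sbin (c ^ 2 * y * q) q hqn (fun n : ℕ => (1 + c ^ 2 * y * q ^ (n + 1))) (fun n => by ring)
  have hsvc4 : Summable (fun n : ℕ => (1 + c ^ 4 * y * q ^ (n + 1)) - 1) :=
    sbin (c ^ 4 * y * q) q hqn (fun n : ℕ => (1 + c ^ 4 * y * q ^ (n + 1))) (fun n => by ring)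
  have hsS7 : Summable (fun n : ℕ => (1 - q ^ (7 * n + 7)) - 1) :=
    sbin (-q ^ 7) (q ^ 7) hq7 (fun n : ℕ => (1 - q ^ (7 * n + 7))) (fun n => by ring)
  have hsU7 : Summable (fun n : ℕ => (1 + y⁻¹ ^ 7 * q ^ (7 * n)) - 1) :=
    sbin (y⁻¹ ^ 7) (q ^ 7) hq7 (fun n : ℕ => (1 + y⁻¹ ^ 7 * q ^ (7 * n))) (fun n => by ring)
  have hsV7 : Summable (fun n : ℕ => (1 + y ^ 7 * q ^ (7 * n + 7)) - 1) :=
    sbin (y ^ 7 * q ^ 7) (q ^ 7) hq7 (fun n : ℕ => (1 + y ^ 7 * q ^ (7 * n + 7))) (fun n => by ring)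
  -- composite summability
  have hsNUM : Summable (fun n : ℕ => (1 - q ^ (n + 1)) ^ 2 * (1 - b * y⁻¹ ^ 2 * q ^ n) * (1 - b ^ 2 * y⁻¹ ^ 2 * q ^ n) * (1 - b ^ 4 * y⁻¹ ^ 2 * q ^ n) * (1 - c * y ^ 2 * q ^ (n + 1)) * (1 - c ^ 2 * y ^ 2 * q ^ (n + 1)) * (1 - c ^ 4 * y ^ 2 * q ^ (n + 1)) - 1) :=
    scongr (smul (smul (smul (smul (smul (smul (smul hsE hsE) hsA1) hsA2) hsA4) hsB1) hsB2) hsB4)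
      (fun n => by ring)
  have hsDEN : Summable (fun n : ℕ => (1 + y⁻¹ * q ^ n) * (1 + y * q ^ (n + 1)) * (1 + b * y⁻¹ * q ^ n) * (1 + b ^ 2 * y⁻¹ * q ^ n) * (1 + b ^ 4 * y⁻¹ * q ^ n) * (1 + c * y * q ^ (n + 1)) * (1 + c ^ 2 * y * q ^ (n + 1)) * (1 + c ^ 4 * y * q ^ (n + 1)) - 1) :=
    smul (smul (smul (smul (smul (smul (smul hsu0 hsv0) hsub1) hsub2) hsub4) hsvc1) hsvc2) hsvc4
  have hsT1 : Summable (fun n : ℕ => (1 - b * y⁻¹ ^ 2 * q ^ n) * (1 - c * y ^ 2 * q ^ (n + 1)) * (1 - q ^ (n + 1)) - 1) := smul (smul hsA1 hsB1) hsE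
  have hsT2 : Summable (fun n : ℕ => (1 - b ^ 2 * y⁻¹ ^ 2 * q ^ n) * (1 - c ^ 2 * y ^ 2 * q ^ (n + 1)) * (1 - q ^ (n + 1)) - 1) := smul (smul hsA2 hsB2) hsE
  have hsT4 : Summable (fun n : ℕ => (1 - b ^ 4 * y⁻¹ ^ 2 * q ^ n) * (1 - c ^ 4 * y ^ 2 * q ^ (n + 1)) * (1 - q ^ (n + 1)) - 1) := smul (smul hsA4 hsB4) hsE
  have hsUU1 : Summable (fun n : ℕ => (1 + c * y⁻¹ * q ^ n) * (1 + b * y * q ^ (n + 1)) * (1 - q ^ (n + 1)) - 1) := smul (smul hsuc1 hsvb1) hsE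
  have hsUU2 : Summable (fun n : ℕ => (1 + c ^ 2 * y⁻¹ * q ^ n) * (1 + b ^ 2 * y * q ^ (n + 1)) * (1 - q ^ (n + 1)) - 1) := smul (smul hsuc2 hsvb2) hsE
  have hsUU4 : Summable (fun n : ℕ => (1 + c ^ 4 * y⁻¹ * q ^ n) * (1 + b ^ 4 * y * q ^ (n + 1)) * (1 - q ^ (n + 1)) - 1) := smul (smul hsuc4 hsvb4) hsE
  have hsW7 : Summable (fun n : ℕ => (1 + y⁻¹ ^ 7 * q ^ (7 * n)) * (1 + y ^ 7 * q ^ (7 * n + 7)) * (1 - q ^ (7 * n + 7)) - 1) := smul (smul hsU7 hsV7) hsS7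
  have hsEE : Summable (fun n : ℕ => ((1 - q ^ (n + 1))) * ((1 - q ^ (n + 1))) - 1) := smul hsE hsE
  have hsE4 : Summable (fun n : ℕ => (1 - q ^ (n + 1)) ^ 4 - 1) :=
    scongr (smul hsEE hsEE) (fun n => by ring)
  have hsE4W7 : Summable (fun n : ℕ => (1 - q ^ (n + 1)) ^ 4 * ((1 + y⁻¹ ^ 7 * q ^ (7 * n)) * (1 + y ^ 7 * q ^ (7 * n + 7)) * (1 - q ^ (7 * n + 7))) - 1) := smul hsE4 hsW7
  have hsC1 : Summable (fun n : ℕ => ((1 - b * y⁻¹ ^ 2 * q ^ n) * (1 - c * y ^ 2 * q ^ (n + 1)) * (1 - q ^ (n + 1))) * ((1 - b ^ 2 * y⁻¹ ^ 2 * q ^ n) * (1 - c ^ 2 * y ^ 2 * q ^ (n + 1)) * (1 - q ^ (n + 1))) - 1) := smul hsT1 hsT2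
  have hsC2 : Summable (fun n : ℕ => ((1 - b * y⁻¹ ^ 2 * q ^ n) * (1 - c * y ^ 2 * q ^ (n + 1)) * (1 - q ^ (n + 1))) * ((1 - b ^ 2 * y⁻¹ ^ 2 * q ^ n) * (1 - c ^ 2 * y ^ 2 * q ^ (n + 1)) * (1 - q ^ (n + 1))) * ((1 - b ^ 4 * y⁻¹ ^ 2 * q ^ n) * (1 - c ^ 4 * y ^ 2 * q ^ (n + 1)) * (1 - q ^ (n + 1))) - 1) := smul hsC1 hsT4
  have hsC3 : Summable (fun n : ℕ => ((1 - b * y⁻¹ ^ 2 * q ^ n) * (1 - c * y ^ 2 * q ^ (n + 1)) * (1 - q ^ (n + 1))) * ((1 - b ^ 2 * y⁻¹ ^ 2 * q ^ n) * (1 - c ^ 2 * y ^ 2 * q ^ (n + 1)) * (1 - q ^ (n + 1))) * ((1 - b ^ 4 * y⁻¹ ^ 2 * q ^ n) * (1 - c ^ 4 * y ^ 2 * q ^ (n + 1)) * (1 - q ^ (n + 1))) * ((1 + c * y⁻¹ * q ^ n) * (1 + b * y * q ^ (n + 1)) * (1 - q ^ (n + 1))) - 1) := smul hsC2 hsUU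1
  have hsC4 : Summable (fun n : ℕ => ((1 - b * y⁻¹ ^ 2 * q ^ n) * (1 - c * y ^ 2 * q ^ (n + 1)) * (1 - q ^ (n + 1))) * ((1 - b ^ 2 * y⁻¹ ^ 2 * q ^ n) * (1 - c ^ 2 * y ^ 2 * q ^ (n + 1)) * (1 - q ^ (n + 1))) * ((1 - b ^ 4 * y⁻¹ ^ 2 * q ^ n) * (1 - c ^ 4 * y ^ 2 * q ^ (n + 1)) * (1 - q ^ (n + 1))) * ((1 + c * y⁻¹ * q ^ n) * (1 + b * y * q ^ (n + 1)) * (1 - q ^ (n + 1))) * ((1 + c ^ 2 * y⁻¹ * q ^ n) * (1 + b ^ 2 * y * q ^ (n + 1)) * (1 - q ^ (n + 1))) - 1) :=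
    smul hsC3 hsUU2
  have hsC5 : Summable
      (fun n : ℕ => ((1 - b * y⁻¹ ^ 2 * q ^ n) * (1 - c * y ^ 2 * q ^ (n + 1)) * (1 - q ^ (n + 1))) * ((1 - b ^ 2 * y⁻¹ ^ 2 * q ^ n) * (1 - c ^ 2 * y ^ 2 * q ^ (n + 1)) * (1 - q ^ (n + 1))) * ((1 - b ^ 4 * y⁻¹ ^ 2 * q ^ n) * (1 - c ^ 4 * y ^ 2 * q ^ (n + 1)) * (1 - q ^ (n + 1))) * ((1 + c * y⁻¹ * q ^ n) * (1 + b * y * q ^ (n + 1)) * (1 - q ^ (n + 1))) * ((1 + c ^ 2 * y⁻¹ * q ^ n) * (1 + b ^ 2 * y * q ^ (n + 1)) * (1 - q ^ (n + 1))) * ((1 + c ^ 4 * y⁻¹ * q ^ n) * (1 + b ^ 4 * y * q ^ (n + 1)) * (1 - q ^ (n + 1))) - 1) := smul hsC4 hsUU4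
  have hsC6 : Summable
      (fun n : ℕ => ((1 - b * y⁻¹ ^ 2 * q ^ n) * (1 - c * y ^ 2 * q ^ (n + 1)) * (1 - q ^ (n + 1))) * ((1 - b ^ 2 * y⁻¹ ^ 2 * q ^ n) * (1 - c ^ 2 * y ^ 2 * q ^ (n + 1)) * (1 - q ^ (n + 1))) * ((1 - b ^ 4 * y⁻¹ ^ 2 * q ^ n) * (1 - c ^ 4 * y ^ 2 * q ^ (n + 1)) * (1 - q ^ (n + 1))) * ((1 + c * y⁻¹ * q ^ n) * (1 + b * y * q ^ (n + 1)) * (1 - q ^ (n + 1))) * ((1 + c ^ 2 * y⁻¹ * q ^ n) * (1 + b ^ 2 * y * q ^ (n + 1)) * (1 - q ^ (n + 1))) * ((1 + c ^ 4 * y⁻¹ * q ^ n) * (1 + b ^ 4 * y * q ^ (n + 1)) * (1 - q ^ (n + 1))) * ((1 + y⁻¹ * q ^ n) * (1 + y * q ^ (n + 1)) * (1 + b * y⁻¹ * q ^ n) * (1 + b ^ 2 * y⁻¹ * q ^ n) * (1 + b ^ 4 * y⁻¹ * q ^ n) * (1 + c * y * q ^ (n + 1)) * (1 + c ^ 2 *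 y * q ^ (n + 1)) * (1 + c ^ 4 * y * q ^ (n + 1))) - 1) :=
    smul hsC5 hsDEN
  -- nonvanishing
  have hnb1 : ‖b * y⁻¹‖ < 1 := by rw [norm_mul, hbn, one_mul]; exact hyi
  have hnb2 : ‖b ^ 2 * y⁻¹‖ < 1 := by rw [norm_mul, norm_pow, hbn, one_pow, one_mul]; exact hyi
  have hnb4 : ‖b ^ 4 * y⁻¹‖ < 1 := by rw [norm_mul, norm_pow, hbn, one_pow, one_mul]; exact hyi
  have hnc1 : ‖c * (y * q)‖ < 1 := by rw [norm_mul, hcn, one_mul]; exact hyq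
  have hnc2 : ‖c ^ 2 * (y * q)‖ < 1 := by
    rw [norm_mul, norm_pow, hcn, one_pow, one_mul]; exact hyq
  have hnc4 : ‖c ^ 4 * (y * q)‖ < 1 := by
    rw [norm_mul, norm_pow, hcn, one_pow, one_mul]; exact hyq
  have hnyi7 : ‖y⁻¹ ^ 7‖ < 1 := by
    rw [norm_pow]; exact pow_lt_one₀ (norm_nonneg _) hyi (by norm_num)
  have hnyq7 : ‖y ^ 7 * q ^ 7‖ < 1 := by
    rw [← mul_pow, norm_pow]; exact pow_lt_one₀ (norm_nonneg _) hyq (by norm_num)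
  have hnq : ‖-q‖ < 1 := by rw [norm_neg]; exact hqn
  have hnq7 : ‖-q ^ 7‖ < 1 := by rw [norm_neg]; exact hq7
  have hneE : ∀ n : ℕ, (1 - q ^ (n + 1)) ≠ 0 := fun n => bne' (-q) q hnq hqle n _ (by ring)
  have hneDEN : ∀ n : ℕ, (1 + y⁻¹ * q ^ n) * (1 + y * q ^ (n + 1)) * (1 + b * y⁻¹ * q ^ n) * (1 + b ^ 2 * y⁻¹ * q ^ n) * (1 + b ^ 4 * y⁻¹ * q ^ n) * (1 + c * y * q ^ (n + 1)) * (1 + c ^ 2 * y * q ^ (n + 1)) * (1 + c ^ 4 * y * q ^ (n + 1)) ≠ 0 := fun n =>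
    mul_ne_zero (mul_ne_zero (mul_ne_zero (mul_ne_zero (mul_ne_zero (mul_ne_zero (mul_ne_zero
      (bne' y⁻¹ q hyi hqle n _ (by ring))
      (bne' (y * q) q hyq hqle n _ (by ring)))
      (bne' (b * y⁻¹) q hnb1 hqle n _ (by ring)))
      (bne' (b ^ 2 * y⁻¹) q hnb2 hqle n _ (by ring)))
      (bne' (b ^ 4 * y⁻¹) q hnb4 hqle n _ (by ring)))
      (bne' (c * (y * q)) q hnc1 hqle n _ (by ring)))
      (bne' (c ^ 2 * (y * q)) q hnc2 hqle n _ (by ring)))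
      (bne' (c ^ 4 * (y * q)) q hnc4 hqle n _ (by ring))
  have hneW7 : ∀ n : ℕ, ((1 + y⁻¹ ^ 7 * q ^ (7 * n)) * (1 + y ^ 7 * q ^ (7 * n + 7)) * (1 - q ^ (7 * n + 7))) ≠ 0 := fun n =>
    mul_ne_zero (mul_ne_zero
      (bne' (y⁻¹ ^ 7) (q ^ 7) hnyi7 hq7le n _ (by ring))
      (bne' (y ^ 7 * q ^ 7) (q ^ 7) hnyq7 hq7le n _ (by ring)))
      (bne' (-q ^ 7) (q ^ 7) hnq7 hq7le n _ (by ring))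
  -- theta/eta conversions
  have hTh1a : Theta1 τ (2 * z + d1) = -Complex.I * Complex.exp (Real.pi * Complex.I * τ / 4) *
      Complex.exp (Real.pi * Complex.I * (2 * z + d1)) * (∏' n : ℕ, ((1 - b * y⁻¹ ^ 2 * q ^ n) * (1 - c * y ^ 2 * q ^ (n + 1)) * (1 - q ^ (n + 1)))) := by
    simp only [Theta1]
    congr 1
    exact tprod_congr fun n => by rw [eqn n, eqn1 n, base1, K1]
  have hTh1b : Theta1 τ (2 * z + 2 * d1) = -Complex.I * Complex.exp (Real.pi * Complex.I * τ / 4) *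
      Complex.exp (Real.pi * Complex.I * (2 * z + 2 * d1)) * (∏' n : ℕ, ((1 - b ^ 2 * y⁻¹ ^ 2 * q ^ n) * (1 - c ^ 2 * y ^ 2 * q ^ (n + 1)) * (1 - q ^ (n + 1)))) := by
    simp only [Theta1]
    congr 1
    exact tprod_congr fun n => by rw [eqn n, eqn1 n, base2, K2]
  have hTh1c : Theta1 τ (2 * z + 4 * d1) = -Complex.I * Complex.exp (Real.pi * Complex.I * τ / 4) *
      Complex.exp (Real.pi * Complex.I * (2 * z + 4 * d1)) * (∏' n : ℕ, ((1 - b ^ 4 * y⁻¹ ^ 2 * q ^ n) * (1 - c ^ 4 * y ^ 2 * q ^ (n + 1)) * (1 - q ^ (n + 1)))) := by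
    simp only [Theta1]
    congr 1
    exact tprod_congr fun n => by rw [eqn n, eqn1 n, base4, K4]
  have hTh2a : Theta2 τ (z - d1) = Complex.exp (Real.pi * Complex.I * τ / 4) *
      Complex.exp (Real.pi * Complex.I * (z - d1)) * (∏' n : ℕ, ((1 + c * y⁻¹ * q ^ n) * (1 + b * y * q ^ (n + 1)) * (1 - q ^ (n + 1)))) := by
    simp only [Theta2]
    congr 1
    exact tprod_congr fun n => by rw [eqn n, eqn1 n, M1, M1']
  have hTh2b : Theta2 τ (z - 2 * d1) = Complex.exp (Real.pi * Complex.I * τ / 4) *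
      Complex.exp (Real.pi * Complex.I * (z - 2 * d1)) * (∏' n : ℕ, ((1 + c ^ 2 * y⁻¹ * q ^ n) * (1 + b ^ 2 * y * q ^ (n + 1)) * (1 - q ^ (n + 1)))) := by
    simp only [Theta2]
    congr 1
    exact tprod_congr fun n => by rw [eqn n, eqn1 n, M2, M2']
  have hTh2c : Theta2 τ (z - 4 * d1) = Complex.exp (Real.pi * Complex.I * τ / 4) *
      Complex.exp (Real.pi * Complex.I * (z - 4 * d1)) * (∏' n : ℕ, ((1 + c ^ 4 * y⁻¹ * q ^ n) * (1 + b ^ 4 * y * q ^ (n + 1)) * (1 - q ^ (n + 1)))) := by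
    simp only [Theta2]
    congr 1
    exact tprod_congr fun n => by rw [eqn n, eqn1 n, M4, M4']
  have hE1 : Eta τ = Complex.exp (Real.pi * Complex.I * τ / 12) * (∏' n : ℕ, ((1 - q ^ (n + 1)))) := by
    simp only [Eta]
    congr 1
    exact tprod_congr fun n => by rw [eqn1 n]
  have hE7 : Eta (7 * τ) = Complex.exp (Real.pi * Complex.I * (7 * τ) / 12) *
      (∏' n : ℕ, ((1 - q ^ (7 * n + 7)))) := by
    simp only [Eta]
    congr 1
    exact tprod_congr fun n => by rw [eqn71 n]
  have hT27 : Theta2 (7 * τ) (7 * z) = Complex.exp (Real.pi * Complex.I * (7 * τ) / 4) *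
      Complex.exp (Real.pi * Complex.I * (7 * z)) * (∏' n : ℕ, ((1 + y⁻¹ ^ 7 * q ^ (7 * n)) * (1 + y ^ 7 * q ^ (7 * n + 7)) * (1 - q ^ (7 * n + 7)))) := by
    simp only [Theta2]
    congr 1
    exact tprod_congr fun n => by rw [eqn7 n, eqn71 n, Z7, Z7']
  -- the main product identity
  have e4 : ((∏' n : ℕ, ((1 - q ^ (n + 1))))) ^ 4 = ∏' n : ℕ, (((1 - q ^ (n + 1))) ^ 4) := by
    rw [show ((∏' n : ℕ, ((1 - q ^ (n + 1))))) ^ 4 = (((∏' n : ℕ, ((1 - q ^ (n + 1))))) * ((∏' n : ℕ, ((1 - q ^ (n + 1)))))) * (((∏' n : ℕ, ((1 - q ^ (n + 1))))) * ((∏' n : ℕ, ((1 - q ^ (n + 1)))))) by ring,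
      tmul' hsE hsE, tmul' hsEE hsEE]
    exact tprod_congr fun n => by ring
  have key : ((∏' n : ℕ, ((1 - q ^ (n + 1)) ^ 2 * (1 - b * y⁻¹ ^ 2 * q ^ n) * (1 - b ^ 2 * y⁻¹ ^ 2 * q ^ n) * (1 - b ^ 4 * y⁻¹ ^ 2 * q ^ n) * (1 - c * y ^ 2 * q ^ (n + 1)) * (1 - c ^ 2 * y ^ 2 * q ^ (n + 1)) * (1 - c ^ 4 * y ^ 2 * q ^ (n + 1))))) * (((∏' n : ℕ, ((1 - q ^ (n + 1))))) ^ 4 * ((∏' n : ℕ, ((1 + y⁻¹ ^ 7 * q ^ (7 * n)) * (1 + y ^ 7 * q ^ (7 * n + 7)) * (1 - q ^ (7 * n + 7)))))) =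
      ((∏' n : ℕ, ((1 - q ^ (7 * n + 7))))) * (((∏' n : ℕ, ((1 - b * y⁻¹ ^ 2 * q ^ n) * (1 - c * y ^ 2 * q ^ (n + 1)) * (1 - q ^ (n + 1))))) * ((∏' n : ℕ, ((1 - b ^ 2 * y⁻¹ ^ 2 * q ^ n) * (1 - c ^ 2 * y ^ 2 * q ^ (n + 1)) * (1 - q ^ (n + 1))))) * ((∏' n : ℕ, ((1 - b ^ 4 * y⁻¹ ^ 2 * q ^ n) * (1 - c ^ 4 * y ^ 2 * q ^ (n + 1)) * (1 - q ^ (n + 1))))) * ((∏' n : ℕ, ((1 + c * y⁻¹ * q ^ n) * (1 + b * y * q ^ (n + 1)) * (1 - q ^ (n + 1))))) * ((∏' n : ℕ, ((1 + c ^ 2 * y⁻¹ * q ^ n) * (1 + b ^ 2 * y * q ^ (n + 1)) * (1 - q ^ (n + 1))))) * ((∏' n : ℕ, ((1 + c ^ 4 * y⁻¹ * q ^ n) * (1 + b ^ 4 * y * q ^ (n + 1)) * (1 - q ^ (n + 1))))) * ((∏' n : ℕ, ((1 + y⁻¹ * q ^ n) * (1 + y * q ^ (n + 1)) * (1 + b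 * y⁻¹ * q ^ n) * (1 + b ^ 2 * y⁻¹ * q ^ n) * (1 + b ^ 4 * y⁻¹ * q ^ n) * (1 + c * y * q ^ (n + 1)) * (1 + c ^ 2 * y * q ^ (n + 1)) * (1 + c ^ 4 * y * q ^ (n + 1)))))) := by
    rw [e4, tmul' hsE4 hsW7, tmul' hsNUM hsE4W7,
      tmul' hsT1 hsT2, tmul' hsC1 hsT4, tmul' hsC2 hsUU1, tmul' hsC3 hsUU2, tmul' hsC4 hsUU4,
      tmul' hsC5 hsDEN, tmul' hsS7 hsC6]
    refine tprod_congr fun n => ?_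
    have hU : (1 + y⁻¹ ^ 7 * q ^ (7 * n)) = (1 + y⁻¹ * q ^ n) * (1 + c * y⁻¹ * q ^ n) * (1 + c ^ 2 * y⁻¹ * q ^ n) * (1 + c ^ 4 * y⁻¹ * q ^ n) * (1 + b * y⁻¹ * q ^ n) * (1 + b ^ 2 * y⁻¹ * q ^ n) * (1 + b ^ 4 * y⁻¹ * q ^ n) := by
      linear_combination (seven b c (y⁻¹ * q ^ n) hb hsum).symm
    have hV : (1 + y ^ 7 * q ^ (7 * n + 7)) = (1 + y * q ^ (n + 1)) * (1 + c * y * q ^ (n + 1)) * (1 + c ^ 2 * y * q ^ (n + 1)) * (1 + c ^ 4 * y * q ^ (n + 1)) * (1 + b * y * q ^ (n + 1)) * (1 + b ^ 2 * y * q ^ (n + 1)) * (1 + b ^ 4 * y * q ^ (n + 1)) := by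
      linear_combination (seven b c (y * q ^ (n + 1)) hb hsum).symm
    rw [hU, hV]
    generalize (1 - q ^ (n + 1)) = g0
    generalize (1 - b * y⁻¹ ^ 2 * q ^ n) = g1
    generalize (1 - b ^ 2 * y⁻¹ ^ 2 * q ^ n) = g2
    generalize (1 - b ^ 4 * y⁻¹ ^ 2 * q ^ n) = g3
    generalize (1 - c * y ^ 2 * q ^ (n + 1)) = g4
    generalize (1 - c ^ 2 * y ^ 2 * q ^ (n + 1)) = g5
    generalize (1 - c ^ 4 * y ^ 2 * q ^ (n + 1)) = g6
    generalize (1 + y⁻¹ * q ^ n) = g7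
    generalize (1 + y * q ^ (n + 1)) = g8
    generalize (1 + b * y⁻¹ * q ^ n) = g9
    generalize (1 + b ^ 2 * y⁻¹ * q ^ n) = g10
    generalize (1 + b ^ 4 * y⁻¹ * q ^ n) = g11
    generalize (1 + c * y⁻¹ * q ^ n) = g12
    generalize (1 + c ^ 2 * y⁻¹ * q ^ n) = g13
    generalize (1 + c ^ 4 * y⁻¹ * q ^ n) = g14
    generalize (1 + b * y * q ^ (n + 1)) = g15
    generalize (1 + b ^ 2 * y * q ^ (n + 1)) = g16
    generalize (1 + b ^ 4 * y * q ^ (n + 1)) = g17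
    generalize (1 + c * y * q ^ (n + 1)) = g18
    generalize (1 + c ^ 2 * y * q ^ (n + 1)) = g19
    generalize (1 + c ^ 4 * y * q ^ (n + 1)) = g20
    generalize (1 - q ^ (7 * n + 7)) = g21
    ring
  -- nonzero infinite products
  have hP10 : ((∏' n : ℕ, ((1 - q ^ (n + 1))))) ≠ 0 := tne hsE hneE
  have hPθ0 : ((∏' n : ℕ, ((1 + y⁻¹ ^ 7 * q ^ (7 * n)) * (1 + y ^ 7 * q ^ (7 * n + 7)) * (1 - q ^ (7 * n + 7))))) ≠ 0 := tne hsW7 hneW7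
  have hPden0 : ((∏' n : ℕ, ((1 + y⁻¹ * q ^ n) * (1 + y * q ^ (n + 1)) * (1 + b * y⁻¹ * q ^ n) * (1 + b ^ 2 * y⁻¹ * q ^ n) * (1 + b ^ 4 * y⁻¹ * q ^ n) * (1 + c * y * q ^ (n + 1)) * (1 + c ^ 2 * y * q ^ (n + 1)) * (1 + c ^ 4 * y * q ^ (n + 1))))) ≠ 0 := tne hsDEN hneDEN
  have hne2 : ((∏' n : ℕ, ((1 - q ^ (n + 1))))) ^ 4 * ((∏' n : ℕ, ((1 + y⁻¹ ^ 7 * q ^ (7 * n)) * (1 + y ^ 7 * q ^ (7 * n + 7)) * (1 - q ^ (7 * n + 7))))) ≠ 0 := mul_ne_zero (pow_ne_zero _ hP10) hPθ0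
  have hratio : ((∏' n : ℕ, ((1 - q ^ (n + 1)) ^ 2 * (1 - b * y⁻¹ ^ 2 * q ^ n) * (1 - b ^ 2 * y⁻¹ ^ 2 * q ^ n) * (1 - b ^ 4 * y⁻¹ ^ 2 * q ^ n) * (1 - c * y ^ 2 * q ^ (n + 1)) * (1 - c ^ 2 * y ^ 2 * q ^ (n + 1)) * (1 - c ^ 4 * y ^ 2 * q ^ (n + 1))))) / ((∏' n : ℕ, ((1 + y⁻¹ * q ^ n) * (1 + y * q ^ (n + 1)) * (1 + b * y⁻¹ * q ^ n) * (1 + b ^ 2 * y⁻¹ * q ^ n) * (1 + b ^ 4 * y⁻¹ * q ^ n) * (1 + c * y * q ^ (n + 1)) * (1 + c ^ 2 * y * q ^ (n + 1)) * (1 + c ^ 4 * y * q ^ (n + 1))))) =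
      (((∏' n : ℕ, ((1 - q ^ (7 * n + 7))))) * (((∏' n : ℕ, ((1 - b * y⁻¹ ^ 2 * q ^ n) * (1 - c * y ^ 2 * q ^ (n + 1)) * (1 - q ^ (n + 1))))) * ((∏' n : ℕ, ((1 - b ^ 2 * y⁻¹ ^ 2 * q ^ n) * (1 - c ^ 2 * y ^ 2 * q ^ (n + 1)) * (1 - q ^ (n + 1))))) * ((∏' n : ℕ, ((1 - b ^ 4 * y⁻¹ ^ 2 * q ^ n) * (1 - c ^ 4 * y ^ 2 * q ^ (n + 1)) * (1 - q ^ (n + 1))))) * ((∏' n : ℕ, ((1 + c * y⁻¹ * q ^ n) * (1 + b * y * q ^ (n + 1)) * (1 - q ^ (n + 1))))) * ((∏' n : ℕ, ((1 + c ^ 2 * y⁻¹ * q ^ n) * (1 + b ^ 2 * y * q ^ (n + 1)) * (1 - q ^ (n + 1))))) * ((∏' n : ℕ, ((1 + c ^ 4 * y⁻¹ * q ^ n) * (1 + b ^ 4 * y * q ^ (n + 1)) * (1 - q ^ (n + 1))))))) /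
        (((∏' n : ℕ, ((1 - q ^ (n + 1))))) ^ 4 * ((∏' n : ℕ, ((1 + y⁻¹ ^ 7 * q ^ (7 * n)) * (1 + y ^ 7 * q ^ (7 * n + 7)) * (1 - q ^ (7 * n + 7)))))) := by
    rw [div_eq_div_iff hPden0 hne2]
    linear_combination key
  -- assemble
  rw [hTh1a, hTh1b, hTh1c, hTh2a, hTh2b, hTh2c, hE1, hE7, hT27]
  rw [show (∏' n : ℕ, ((1 - q ^ (n + 1)) ^ 2 * (1 - b * y⁻¹ ^ 2 * q ^ n) * (1 - b ^ 2 * y⁻¹ ^ 2 * q ^ n) * (1 - b ^ 4 * y⁻¹ ^ 2 * q ^ n) * (1 - c * y ^ 2 * q ^ (n + 1)) * (1 - c ^ 2 * y ^ 2 * q ^ (n + 1)) * (1 - c ^ 4 * y ^ 2 * q ^ (n + 1)) / ((1 + y⁻¹ * q ^ n) * (1 + y * q ^ (n + 1)) * (1 + b * y⁻¹ * q ^ n) * (1 + b ^ 2 * y⁻¹ * q ^ n) * (1 + b ^ 4 * y⁻¹ * q ^ n) * (1 + c * y * q ^ (n + 1)) * (1 + c ^ 2 * y * q ^ (n + 1))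 * (1 + c ^ 4 * y * q ^ (n + 1))))) = ((∏' n : ℕ, ((1 - q ^ (n + 1)) ^ 2 * (1 - b * y⁻¹ ^ 2 * q ^ n) * (1 - b ^ 2 * y⁻¹ ^ 2 * q ^ n) * (1 - b ^ 4 * y⁻¹ ^ 2 * q ^ n) * (1 - c * y ^ 2 * q ^ (n + 1)) * (1 - c ^ 2 * y ^ 2 * q ^ (n + 1)) * (1 - c ^ 4 * y ^ 2 * q ^ (n + 1))))) / ((∏' n : ℕ, ((1 + y⁻¹ * q ^ n) * (1 + y * q ^ (n + 1)) * (1 + b * y⁻¹ * q ^ n) * (1 + b ^ 2 * y⁻¹ * q ^ n) * (1 + b ^ 4 * y⁻¹ * q ^ n) * (1 + c * y * q ^ (n + 1)) * (1 + c ^ 2 * y * q ^ (n + 1)) * (1 + c ^ 4 * y * q ^ (n + 1))))) from qdiv hsNUM hsDEN hneDEN]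
  rw [hratio]
  set PE := ((∏' n : ℕ, ((1 - q ^ (n + 1))))) with hPE
  set PW := ((∏' n : ℕ, ((1 + y⁻¹ ^ 7 * q ^ (7 * n)) * (1 + y ^ 7 * q ^ (7 * n + 7)) * (1 - q ^ (7 * n + 7))))) with hPW
  set PS := ((∏' n : ℕ, ((1 - q ^ (7 * n + 7))))) with hPS
  set PT1 := ((∏' n : ℕ, ((1 - b * y⁻¹ ^ 2 * q ^ n) * (1 - c * y ^ 2 * q ^ (n + 1)) * (1 - q ^ (n + 1))))) with hPT1
  set PT2 := ((∏' n : ℕ, ((1 - b ^ 2 * y⁻¹ ^ 2 * q ^ n) * (1 - c ^ 2 * y ^ 2 * q ^ (n + 1)) * (1 - q ^ (n + 1))))) with hPT2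
  set PT4 := ((∏' n : ℕ, ((1 - b ^ 4 * y⁻¹ ^ 2 * q ^ n) * (1 - c ^ 4 * y ^ 2 * q ^ (n + 1)) * (1 - q ^ (n + 1))))) with hPT4
  set PU1 := ((∏' n : ℕ, ((1 + c * y⁻¹ * q ^ n) * (1 + b * y * q ^ (n + 1)) * (1 - q ^ (n + 1))))) with hPU1
  set PU2 := ((∏' n : ℕ, ((1 + c ^ 2 * y⁻¹ * q ^ n) * (1 + b ^ 2 * y * q ^ (n + 1)) * (1 - q ^ (n + 1))))) with hPU2
  set PU4 := ((∏' n : ℕ, ((1 + c ^ 4 * y⁻¹ * q ^ n) * (1 + b ^ 4 * y * q ^ (n + 1)) * (1 - q ^ (n + 1))))) with hPU4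
  rw [show Complex.exp (Real.pi * Complex.I * (7 * τ) / 12)
        = Complex.exp (Real.pi * Complex.I * τ / 12) ^ 7 from by
      rw [← Complex.exp_nat_mul]; congr 1; push_cast; ring,
    show Complex.exp (Real.pi * Complex.I * (7 * τ) / 4)
        = Complex.exp (Real.pi * Complex.I * τ / 12) ^ 21 from by
      rw [← Complex.exp_nat_mul]; congr 1; push_cast; ring,
    show Complex.exp (Real.pi * Complex.I * τ / 4)
        = Complex.exp (Real.pi * Complex.I * τ / 12) ^ 3 from by
      rw [← Complex.exp_nat_mul]; congr 1; push_cast; ring,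
    show Complex.exp (Real.pi * Complex.I * (7 * z))
        = Complex.exp (Real.pi * Complex.I * z) ^ 7 from by
      rw [← Complex.exp_nat_mul]; congr 1; push_cast; ring,
    show Complex.exp (Real.pi * Complex.I * (2 * z + d1))
        = Complex.exp (Real.pi * Complex.I * z) ^ 2 * ε from by
      rw [← hε]; simp only [← Complex.exp_nat_mul, ← Complex.exp_add]; congr 1; push_cast; ring,
    show Complex.exp (Real.pi * Complex.I * (2 * z + 2 * d1))
        = Complex.exp (Real.pi * Complex.I * z) ^ 2 * ε ^ 2 from by
      rw [← hε]; simp only [← Complex.exp_nat_mul, ← Complex.exp_add]; congr 1; push_cast; ring,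
    show Complex.exp (Real.pi * Complex.I * (2 * z + 4 * d1))
        = Complex.exp (Real.pi * Complex.I * z) ^ 2 * ε ^ 4 from by
      rw [← hε]; simp only [← Complex.exp_nat_mul, ← Complex.exp_add]; congr 1; push_cast; ring,
    show Complex.exp (Real.pi * Complex.I * (z - d1))
        = Complex.exp (Real.pi * Complex.I * z) * ε⁻¹ from by
      rw [← hε]
      simp only [← Complex.exp_nat_mul, ← Complex.exp_neg, ← Complex.exp_add]
      congr 1; push_cast; ring,
    show Complex.exp (Real.pi * Complex.I * (z - 2 * d1))
        = Complex.exp (Real.pi * Complex.I * z) * ε⁻¹ ^ 2 from by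
      rw [← hε]
      simp only [← Complex.exp_nat_mul, ← Complex.exp_neg, ← Complex.exp_add]
      congr 1; push_cast; ring,
    show Complex.exp (Real.pi * Complex.I * (z - 4 * d1))
        = Complex.exp (Real.pi * Complex.I * z) * ε⁻¹ ^ 4 from by
      rw [← hε]
      simp only [← Complex.exp_nat_mul, ← Complex.exp_neg, ← Complex.exp_add]
      congr 1; push_cast; ring,
    show y = Complex.exp (Real.pi * Complex.I * z) ^ 2 from by
      rw [hy, ← Complex.exp_nat_mul]; congr 1; push_cast; ring]
  exact final_abstract _ _ _ _ _ _ _ _ _ _ _ _ (Complex.exp_ne_zero _) (Complex.exp_ne_zero _)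
    hε0 hP10 hPθ0 hε7
set_option maxHeartbeats 2000000

/-- Umbral moonshine identity for the classes 14A, 14B of G⁽⁴⁾: the graded trace equals ψ⁽⁴⁾_{14AB}. -/
theorem stmt_15 (τ z : ℂ) (h1 : 0 < -z.im) (h2 : -z.im < τ.im)
    (q y : ℂ)
    (hq : q = Complex.exp (2 * Real.pi * Complex.I * τ))
    (hy : y = Complex.exp (2 * Real.pi * Complex.I * z)) :
    -y * (∏' n : ℕ,
      ((1 - q ^ (n + 1)) ^ 2 *
          (1 - zeta7⁻¹ * y⁻¹ ^ 2 * q ^ n) * (1 - zeta7⁻¹ ^ 2 * y⁻¹ ^ 2 * q ^ n) *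
          (1 - zeta7⁻¹ ^ 4 * y⁻¹ ^ 2 * q ^ n) * (1 - zeta7 * y ^ 2 * q ^ (n + 1)) *
          (1 - zeta7 ^ 2 * y ^ 2 * q ^ (n + 1)) * (1 - zeta7 ^ 4 * y ^ 2 * q ^ (n + 1)) /
        ((1 + y⁻¹ * q ^ n) * (1 + y * q ^ (n + 1)) *
          (1 + zeta7⁻¹ * y⁻¹ * q ^ n) * (1 + zeta7⁻¹ ^ 2 * y⁻¹ * q ^ n) *
          (1 + zeta7⁻¹ ^ 4 * y⁻¹ * q ^ n) * (1 + zeta7 * y * q ^ (n + 1)) *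
          (1 + zeta7 ^ 2 * y * q ^ (n + 1)) * (1 + zeta7 ^ 4 * y * q ^ (n + 1)))))
    - y * (∏' n : ℕ,
      ((1 - q ^ (n + 1)) ^ 2 *
          (1 - zeta7 * y⁻¹ ^ 2 * q ^ n) * (1 - zeta7 ^ 2 * y⁻¹ ^ 2 * q ^ n) *
          (1 - zeta7 ^ 4 * y⁻¹ ^ 2 * q ^ n) * (1 - zeta7⁻¹ * y ^ 2 * q ^ (n + 1)) *
          (1 - zeta7⁻¹ ^ 2 * y ^ 2 * q ^ (n + 1)) * (1 - zeta7⁻¹ ^ 4 * y ^ 2 * q ^ (n + 1)) /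
        ((1 + y⁻¹ * q ^ n) * (1 + y * q ^ (n + 1)) *
          (1 + zeta7 * y⁻¹ * q ^ n) * (1 + zeta7 ^ 2 * y⁻¹ * q ^ n) *
          (1 + zeta7 ^ 4 * y⁻¹ * q ^ n) * (1 + zeta7⁻¹ * y * q ^ (n + 1)) *
          (1 + zeta7⁻¹ ^ 2 * y * q ^ (n + 1)) * (1 + zeta7⁻¹ ^ 4 * y * q ^ (n + 1)))))
    = Complex.I * (Eta (7 * τ) / ((Eta τ) ^ 4 * Theta2 (7 * τ) (7 * z))) *
        (Theta1 τ (2 * z + 1 / 7) * Theta1 τ (2 * z + 2 / 7) * Theta1 τ (2 * z + 4 / 7) *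
            Theta2 τ (z - 1 / 7) * Theta2 τ (z - 2 / 7) * Theta2 τ (z - 4 / 7) +
          Theta1 τ (2 * z - 1 / 7) * Theta1 τ (2 * z - 2 / 7) * Theta1 τ (2 * z - 4 / 7) *
            Theta2 τ (z + 1 / 7) * Theta2 τ (z + 2 / 7) * Theta2 τ (z + 4 / 7)) := by
  have hτim : 0 < τ.im := lt_trans h1 h2
  have hπC : (Real.pi : ℂ) ≠ 0 := by exact_mod_cast Real.pi_ne_zero
  have hqn : ‖q‖ < 1 := by
    rw [hq, Complex.norm_exp, Real.exp_lt_one_iff]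
    have hre : (2 * (Real.pi : ℂ) * Complex.I * τ).re = -(2 * Real.pi * τ.im) := by
      simp [Complex.mul_re, Complex.mul_im]
    rw [hre]
    nlinarith [Real.pi_pos]
  have hyi : ‖y⁻¹‖ < 1 := by
    have hyinv : y⁻¹ = Complex.exp (-(2 * Real.pi * Complex.I * z)) := by
      rw [hy, ← Complex.exp_neg]
    rw [hyinv, Complex.norm_exp, Real.exp_lt_one_iff]
    have hre : (-(2 * (Real.pi : ℂ) * Complex.I * z)).re = 2 * Real.pi * z.im := by
      simp [Complex.mul_re, Complex.mul_im]
    rw [hre]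
    nlinarith [Real.pi_pos]
  have hyq : ‖y * q‖ < 1 := by
    have hyqe : y * q = Complex.exp (2 * Real.pi * Complex.I * z + 2 * Real.pi * Complex.I * τ) := by
      rw [hy, hq, Complex.exp_add]
    rw [hyqe, Complex.norm_exp, Real.exp_lt_one_iff]
    have hre : (2 * (Real.pi : ℂ) * Complex.I * z + 2 * (Real.pi : ℂ) * Complex.I * τ).re
        = -(2 * Real.pi * (z.im + τ.im)) := by
      simp [Complex.add_re, Complex.mul_re, Complex.mul_im]
      ring
    rw [hre]
    nlinarith [Real.pi_pos]
  have hz0 : zeta7 ≠ 0 := by unfold zeta7; exact Complex.exp_ne_zero _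
  have hz7 : zeta7 ^ 7 = 1 := by
    unfold zeta7
    rw [← Complex.exp_nat_mul,
      show ((7 : ℕ) : ℂ) * (2 * Real.pi * Complex.I / 7) = 2 * Real.pi * Complex.I by
        push_cast; ring]
    exact Complex.exp_two_pi_mul_I
  have hz1 : zeta7 ≠ 1 := by
    unfold zeta7
    intro h
    rw [Complex.exp_eq_one_iff] at h
    obtain ⟨k, hk⟩ := h
    have hne : (2 * (Real.pi : ℂ) * Complex.I) ≠ 0 := by
      simp [hπC, Complex.I_ne_zero]
    have h2 : (k : ℂ) * 7 = 1 := by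
      apply mul_left_cancel₀ hne
      rw [mul_one]
      linear_combination (-7 : ℂ) * hk
    have h3 : (k * 7 : ℤ) = 1 := by exact_mod_cast h2
    omega
  have hsum1 : 1 + zeta7 + zeta7 ^ 2 + zeta7 ^ 3 + zeta7 ^ 4 + zeta7 ^ 5 + zeta7 ^ 6 = 0 := by
    have hd : zeta7 - 1 ≠ 0 := sub_ne_zero.mpr hz1
    apply mul_left_cancel₀ hd
    rw [mul_zero]
    linear_combination hz7
  have hsum2 : 1 + zeta7⁻¹ + zeta7⁻¹ ^ 2 + zeta7⁻¹ ^ 3 + zeta7⁻¹ ^ 4 + zeta7⁻¹ ^ 5 + zeta7⁻¹ ^ 6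
      = 0 := by
    have hinv : zeta7⁻¹ = zeta7 ^ 6 := inv_eq_of_mul_eq_one_right (by linear_combination hz7)
    rw [hinv]
    linear_combination hsum1 + (zeta7 ^ 5 + zeta7 ^ 11 + zeta7 ^ 4 + zeta7 ^ 17 + zeta7 ^ 10 +
      zeta7 ^ 3 + zeta7 ^ 23 + zeta7 ^ 16 + zeta7 ^ 9 + zeta7 ^ 2 + zeta7 ^ 29 + zeta7 ^ 22 +
      zeta7 ^ 15 + zeta7 ^ 8 + zeta7) * hz7
  have hε1n : ‖Complex.exp (Real.pi * Complex.I * (1 / 7))‖ = 1 := by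
    rw [Complex.norm_exp,
      show ((Real.pi : ℂ) * Complex.I * (1 / 7)).re = 0 by simp [Complex.mul_re, Complex.mul_im]]
    exact Real.exp_zero
  have hε2n : ‖Complex.exp (Real.pi * Complex.I * (-(1 / 7)))‖ = 1 := by
    rw [Complex.norm_exp,
      show ((Real.pi : ℂ) * Complex.I * (-(1 / 7))).re = 0 by simp [Complex.mul_re, Complex.mul_im]]
    exact Real.exp_zero
  have hε17 : Complex.exp (Real.pi * Complex.I * (1 / 7)) ^ 7 = -1 := by
    rw [← Complex.exp_nat_mul,
      show ((7 : ℕ) : ℂ) * (Real.pi * Complex.I * (1 / 7)) = Real.pi * Complex.I by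
        push_cast; ring]
    exact Complex.exp_pi_mul_I
  have hε27 : Complex.exp (Real.pi * Complex.I * (-(1 / 7))) ^ 7 = -1 := by
    rw [← Complex.exp_nat_mul,
      show ((7 : ℕ) : ℂ) * (Real.pi * Complex.I * (-(1 / 7))) = -(Real.pi * Complex.I) by
        push_cast; ring,
      Complex.exp_neg, Complex.exp_pi_mul_I]
    norm_num
  have hc1 : zeta7 = Complex.exp (Real.pi * Complex.I * (1 / 7)) ^ 2 := by
    unfold zeta7
    rw [← Complex.exp_nat_mul]
    congr 1
    push_cast
    ring
  have hc2 : zeta7⁻¹ = Complex.exp (Real.pi * Complex.I * (-(1 / 7))) ^ 2 := by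
    unfold zeta7
    rw [← Complex.exp_nat_mul, ← Complex.exp_neg]
    congr 1
    push_cast
    ring
  have m1 := master τ z q y hq hy hqn hyi hyq zeta7⁻¹ zeta7
    (Complex.exp (Real.pi * Complex.I * (1 / 7))) (1 / 7) (2 / 7) (4 / 7)
    (by norm_num) (by norm_num) rfl hε1n hε17 hc1 (inv_mul_cancel₀ hz0) hsum1
  have m2 := master τ z q y hq hy hqn hyi hyq zeta7 zeta7⁻¹
    (Complex.exp (Real.pi * Complex.I * (-(1 / 7)))) (-(1 / 7)) (-(2 / 7)) (-(4 / 7))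
    (by norm_num) (by norm_num) rfl hε2n hε27 hc2 (mul_inv_cancel₀ hz0) hsum2
  rw [show (2 * z - 1 / 7 : ℂ) = 2 * z + -(1 / 7) by ring,
    show (2 * z - 2 / 7 : ℂ) = 2 * z + -(2 / 7) by ring,
    show (2 * z - 4 / 7 : ℂ) = 2 * z + -(4 / 7) by ring,
    show (z + 1 / 7 : ℂ) = z - -(1 / 7) by ring,
    show (z + 2 / 7 : ℂ) = z - -(2 / 7) by ring,
    show (z + 4 / 7 : ℂ) = z - -(4 / 7) by ring]
  linear_combination m1 + m2
end
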